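/- arXiv:1504.05401 — 10 statements merged into one kernel-verified Lean document; each statement's English description precedes it below -/
import Mathlib

section
/- If G is a prime graph (a graph whose only modules are trivial: the empty set, singletons, and the whole vertex set) that contains no induced banner and no induced house, then G contains no induced cycle on four vertices. -/
open SimpleGraph

/-- The banner: a 4-cycle 0-1-2-3-0 with a pendant vertex 4 adjacent to 0. -/
def banner : SimpleGraph (Fin 5) :=
  SimpleGraph.fromRel (fun i j => (i, j) ∈ [((0 : Fin 5), 1), (1, 2), (2, 3), (3, 0), (0, 4)])

/-- The house: a 4-cycle 0-1-2-3-0 with a vertex 4 adjacent to 2 and 3. -/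
def house : SimpleGraph (Fin 5) :=
  SimpleGraph.fromRel (fun i j => (i, j) ∈ [((0 : Fin 5), 1), (1, 2), (2, 3), (3, 0), (2, 4), (3, 4)])

/-- The chordless 4-cycle. -/
def cycle4 : SimpleGraph (Fin 4) :=
  SimpleGraph.fromRel (fun i j => j = i + 1)

/-- The chordless 5-cycle. -/
def cycle5 : SimpleGraph (Fin 5) :=
  SimpleGraph.fromRel (fun i j => j = i + 1)

/-- The complete bipartite graph K_{2,3}. -/
def k23 : SimpleGraph (Fin 2 ⊕ Fin 3) := completeBipartiteGraph (Fin 2) (Fin 3)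

/-- `G` contains no induced copy of `F` (an embedding preserves both adjacency
and non-adjacency). -/
def Free {W : Type*} {V : Type*} (F : SimpleGraph W) (G : SimpleGraph V) : Prop :=
  IsEmpty (F ↪g G)

/-- `v 0, ..., v 4` form an induced (chordless) 5-cycle of `G`, edges `v i - v (i+1)`. -/
def IsInducedC5 {V : Type*} (G : SimpleGraph V) (v : Fin 5 → V) : Prop :=
  Function.Injective v ∧ ∀ i j, G.Adj (v i) (v j) ↔ (j = i + 1 ∨ i = j + 1)

/-- `v 0, ..., v 4` form an induced house in `G`: 4-cycle `v 0, v 1, v 2, v 3`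
(standing for v1,v2,v3,v4) plus `v 4` (standing for v5) adjacent to `v 1` and `v 2`. -/
def IsInducedHouse {V : Type*} (G : SimpleGraph V) (v : Fin 5 → V) : Prop :=
  Function.Injective v ∧ ∀ i j, G.Adj (v i) (v j) ↔
    ((i, j) ∈ [((0 : Fin 5), 1), (1, 2), (2, 3), (3, 0), (1, 4), (2, 4)] ∨
     (j, i) ∈ [((0 : Fin 5), 1), (1, 2), (2, 3), (3, 0), (1, 4), (2, 4)])

/-- `Q` is disjoint from and anticomplete to the five vertices `v 0, ..., v 4`. -/
def Anticomplete5 {V : Type*} (G : SimpleGraph V) (Q : Set V) (v : Fin 5 → V) : Prop :=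
  (∀ i, v i ∉ Q) ∧ ∀ q ∈ Q, ∀ i, ¬ G.Adj q (v i)
/-- A module: no vertex outside `M` distinguishes two vertices of `M`. -/
def SimpleGraph.IsModuleSet {V : Type*} (G : SimpleGraph V) (M : Set V) : Prop :=
  ∀ z ∉ M, ∀ x ∈ M, ∀ y ∈ M, (G.Adj z x ↔ G.Adj z y)

/-- Helper: build a graph embedding from an injective map realizing the pattern. -/
def embOfPattern {W V : Type*} {F : SimpleGraph W} {G : SimpleGraph V}
    (v : W → V) (hinj : Function.Injective v)
    (h : ∀ i j, G.Adj (v i) (v j) ↔ F.Adj i j) : F ↪g G :=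
  ⟨⟨v, hinj⟩, h _ _⟩

/-- Key lemma: in a banner-free, house-free graph, any vertex distinguishing an
opposite pair of an induced 4-cycle is adjacent to both other cycle vertices. -/
lemma key_distinguisher {V : Type*} {G : SimpleGraph V}
    (hban : _root_.Free banner G) (hhouse : _root_.Free house G)
    {x b y d z : V}
    (hxb : G.Adj x b) (hby : G.Adj b y) (hyd : G.Adj y d) (hdx : G.Adj d x)
    (hxy : ¬ G.Adj x y) (hbd : ¬ G.Adj b d) (nbd : b ≠ d)
    (hzx : G.Adj z x) (hzy : ¬ G.Adj z y) :
    G.Adj z b ∧ G.Adj z d := by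
  have nxy : x ≠ y := fun h => hzy (h ▸ hzx)
  have nzx : z ≠ x := hzx.ne
  have nzy : z ≠ y := by rintro rfl; exact hxy (hzx.symm)
  have nzb : z ≠ b := by rintro rfl; exact hzy hby
  have nzd : z ≠ d := by rintro rfl; exact hzy hyd.symm
  by_cases hzb : G.Adj z b <;> by_cases hzd : G.Adj z d
  · exact ⟨hzb, hzd⟩
  · -- z ~ b, z ≁ d : house on d,y,b,x,z
    exfalso
    have hbx := hxb.symm; have hyb := hby.symm; have hdy := hyd.symm; have hxd := hdx.symm
    have hxz := hzx.symm; have hbz := hzb.symm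
    have hyx : ¬ G.Adj y x := fun h => hxy h.symm
    have hdb : ¬ G.Adj d b := fun h => hbd h.symm
    have hyz : ¬ G.Adj y z := fun h => hzy h.symm
    have hdz : ¬ G.Adj d z := fun h => hzd h.symm
    have nxb := hxb.ne; have nby := hby.ne; have nyd := hyd.ne; have ndx := hdx.ne
    refine hhouse.false (embOfPattern ![d,y,b,x,z] ?_ ?_)
    · intro i j hij
      fin_cases i <;> fin_cases j <;> simp_all <;> tauto
    · intro i j
      fin_cases i <;> fin_cases j <;> simp [house] <;> assumption
  · -- z ≁ b, z ~ d : house on b,y,d,x,z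
    exfalso
    have hbx := hxb.symm; have hyb := hby.symm; have hdy := hyd.symm; have hxd := hdx.symm
    have hxz := hzx.symm; have hdz := hzd.symm
    have hyx : ¬ G.Adj y x := fun h => hxy h.symm
    have hdb : ¬ G.Adj d b := fun h => hbd h.symm
    have hyz : ¬ G.Adj y z := fun h => hzy h.symm
    have hbz : ¬ G.Adj b z := fun h => hzb h.symm
    have nxb := hxb.ne; have nby := hby.ne; have nyd := hyd.ne; have ndx := hdx.ne
    refine hhouse.false (embOfPattern ![b,y,d,x,z] ?_ ?_)
    · intro i j hij
      fin_cases i <;> fin_cases j <;> simp_all <;> tauto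
    · intro i j
      fin_cases i <;> fin_cases j <;> simp [house] <;> assumption
  · -- z ≁ b, z ≁ d : banner on x,b,y,d,z
    exfalso
    have hbx := hxb.symm; have hyb := hby.symm; have hdy := hyd.symm; have hxd := hdx.symm
    have hxz := hzx.symm
    have hyx : ¬ G.Adj y x := fun h => hxy h.symm
    have hdb : ¬ G.Adj d b := fun h => hbd h.symm
    have hyz : ¬ G.Adj y z := fun h => hzy h.symm
    have hbz : ¬ G.Adj b z := fun h => hzb h.symm
    have hdz : ¬ G.Adj d z := fun h => hzd h.symm
    have nxb := hxb.ne; have nby := hby.ne; have nyd := hyd.ne; have ndx := hdx.ne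
    refine hban.false (embOfPattern ![x,b,y,d,z] ?_ ?_)
    · intro i j hij
      fin_cases i <;> fin_cases j <;> simp_all <;> tauto
    · intro i j
      fin_cases i <;> fin_cases j <;> simp [banner] <;> assumption

theorem stmt_0 {V : Type*} (G : SimpleGraph V)
    (hprime : ∀ M : Set V, G.IsModuleSet M → M = ∅ ∨ (∃ u, M = {u}) ∨ M = Set.univ)
    (hban : _root_.Free banner G) (hhouse : _root_.Free house G) :
    _root_.Free cycle4 G := by
  constructor
  intro f
  set a := f 0 with ha
  set b := f 1 with hb
  set c := f 2 with hc
  set d := f 3 with hd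
  have hab : G.Adj a b := f.map_adj_iff.2 (by constructor <;> decide)
  have hbc : G.Adj b c := f.map_adj_iff.2 (by constructor <;> decide)
  have hcd : G.Adj c d := f.map_adj_iff.2 (by constructor <;> decide)
  have hda : G.Adj d a := f.map_adj_iff.2 (by constructor <;> decide)
  have hac : ¬ G.Adj a c := fun h => by
    have := f.map_adj_iff.1 h
    simp [cycle4] at this
  have hbd : ¬ G.Adj b d := fun h => by
    have := f.map_adj_iff.1 h
    simp [cycle4] at this
  have nac : a ≠ c := fun h => by
    have := f.injective h; simp at this
  have nbd : b ≠ d := fun h => by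
    have := f.injective h; simp at this
  -- M : common neighbours of b and d
  set M : V → Prop := fun v => G.Adj v b ∧ G.Adj v d with hM
  -- R : nonadjacency within M
  set R : V → V → Prop := fun u w => M u ∧ M w ∧ ¬ G.Adj u w with hR
  set M0 : Set V := {v | Relation.ReflTransGen R a v} with hM0
  have hMa : M a := ⟨hab, hda.symm⟩
  have hMc : M c := ⟨hbc.symm, hcd⟩
  have haM0 : a ∈ M0 := Relation.ReflTransGen.refl
  have hcM0 : c ∈ M0 := Relation.ReflTransGen.single ⟨hMa, hMc, hac⟩
  have hsub : ∀ v ∈ M0, M v := by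
    intro v hv
    induction hv with
    | refl => exact hMa
    | tail _ h => exact h.2.1
  have hRsymm : Symmetric R := by
    rintro u w ⟨h1, h2, h3⟩
    exact ⟨h2, h1, fun h => h3 h.symm⟩
  -- absorption of distinguishers
  have habsorb : ∀ z x y : V, x ∈ M0 → Relation.ReflTransGen R x y →
      G.Adj z x → ¬ G.Adj z y → z ∈ M0 := by
    intro z x y hx h
    induction h with
    | refl => intro h1 h2; exact absurd h1 h2
    | @tail w y' hxw hwy ih =>
      intro hzx hzy
      by_cases hzw : G.Adj z w
      · obtain ⟨hMw, hMy, hnwy⟩ := hwy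
        obtain ⟨hzb, hzd⟩ := key_distinguisher hban hhouse
          hMw.1 hMy.1.symm hMy.2 hMw.2.symm hnwy hbd nbd hzw hzy
        have hy'M0 : y' ∈ M0 := (Relation.ReflTransGen.trans hx hxw).tail ⟨hMw, hMy, hnwy⟩
        exact hy'M0.tail ⟨hMy, ⟨hzb, hzd⟩, fun h => hzy h.symm⟩
      · exact ih hzx hzw
  -- connectivity within M0
  have hconn : ∀ x ∈ M0, ∀ y ∈ M0, Relation.ReflTransGen R x y := by
    intro x hx y hy
    exact Relation.ReflTransGen.trans ((@Relation.ReflTransGen.stdSymm _ R ⟨hRsymm⟩).symm _ _ hx) hy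
  have hmod : G.IsModuleSet M0 := by
    intro z hz x hx y hy
    constructor
    · intro hzx
      by_contra hzy
      exact hz (habsorb z x y hx (hconn x hx y hy) hzx hzy)
    · intro hzy
      by_contra hzx
      exact hz (habsorb z y x hy (hconn y hy x hx) hzy hzx)
  rcases hprime M0 hmod with h | ⟨u, h⟩ | h
  · rw [h] at haM0; exact haM0
  · rw [h] at haM0 hcM0
    exact nac (haM0.trans hcM0.symm)
  · have hbM0 : b ∈ M0 := h ▸ Set.mem_univ b
    exact G.loopless.irrefl b (hsub b hbM0).1
end

section
/- Let G be a (P6, banner)-free graph containing an induced 5-cycle H with vertices v1,...,v5 (indices mod 5). If a vertex x outside H has exactly three neighbors on H, then these three neighbors are consecutive on the cycle, i.e., N_H(x) = {v_{i-1}, v_i, v_{i+1}} for some i. -/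
open SimpleGraph

lemma no_bad {V : Type*} (G : SimpleGraph V) (hban : _root_.Free banner G)
    (v : Fin 5 → V) (hC5 : IsInducedC5 G v) (x : V) (hx : ∀ i, x ≠ v i)
    (a b c d : Fin 5) (hb : b = a + 2) (hc : c = a + 1) (hd : d = a + 4)
    (h1 : G.Adj x (v a)) (h2 : G.Adj x (v b))
    (h3 : ¬ G.Adj x (v c)) (h4 : ¬ G.Adj x (v d)) : False := by
  subst hb hc hd
  obtain ⟨hinj, hadj⟩ := hC5
  have key1 : ∀ a : Fin 5, ¬(a + 2 = a + 1 ∨ a = a + 2 + 1) := by decide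
  have key2 : ∀ a : Fin 5, (a + 1 = a + 1 ∨ a = a + 1 + 1) := by decide
  have key3 : ∀ a : Fin 5, (a + 4 = a + 1 ∨ a = a + 4 + 1) := by decide
  have key4 : ∀ a : Fin 5, (a + 1 = a + 2 + 1 ∨ a + 2 = a + 1 + 1) := by decide
  have key5 : ∀ a : Fin 5, ¬(a + 4 = a + 2 + 1 ∨ a + 2 = a + 4 + 1) := by decide
  have key6 : ∀ a : Fin 5, ¬(a + 4 = a + 1 + 1 ∨ a + 1 = a + 4 + 1) := by decide
  have dists : ∀ a : Fin 5, a ≠ a+2 ∧ a ≠ a+1 ∧ a ≠ a+4 ∧ a+2 ≠ a+1 ∧ a+2 ≠ a+4 ∧ a+1 ≠ a+4 := by decide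
  obtain ⟨d1, d2, d3, d4, d5, d6⟩ := dists a
  have A01 : G.Adj (v a) x := h1.symm
  have A02 : ¬ G.Adj (v a) (v (a+2)) := fun h => key1 a ((hadj _ _).mp h)
  have A20 : ¬ G.Adj (v (a+2)) (v a) := fun h => A02 h.symm
  have A03 : G.Adj (v a) (v (a+1)) := (hadj _ _).mpr (key2 a)
  have A30 : G.Adj (v (a+1)) (v a) := A03.symm
  have A04 : G.Adj (v a) (v (a+4)) := (hadj _ _).mpr (key3 a)
  have A40 : G.Adj (v (a+4)) (v a) := A04.symm
  have A23 : G.Adj (v (a+2)) (v (a+1)) := (hadj _ _).mpr (key4 a)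
  have A32 : G.Adj (v (a+1)) (v (a+2)) := A23.symm
  have A24 : ¬ G.Adj (v (a+2)) (v (a+4)) := fun h => key5 a ((hadj _ _).mp h)
  have A42 : ¬ G.Adj (v (a+4)) (v (a+2)) := fun h => A24 h.symm
  have A34 : ¬ G.Adj (v (a+1)) (v (a+4)) := fun h => key6 a ((hadj _ _).mp h)
  have A43 : ¬ G.Adj (v (a+4)) (v (a+1)) := fun h => A34 h.symm
  have B12 : G.Adj x (v (a+2)) := h2
  have B21 : G.Adj (v (a+2)) x := h2.symm
  have B13 : ¬ G.Adj x (v (a+1)) := h3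
  have B31 : ¬ G.Adj (v (a+1)) x := fun h => h3 h.symm
  have B14 : ¬ G.Adj x (v (a+4)) := h4
  have B41 : ¬ G.Adj (v (a+4)) x := fun h => h4 h.symm
  have E1 : v a ≠ v (a+2) := fun h => d1 (hinj h)
  have E1' : v (a+2) ≠ v a := E1.symm
  have E2 : v a ≠ v (a+1) := fun h => d2 (hinj h)
  have E2' : v (a+1) ≠ v a := E2.symm
  have E3 : v a ≠ v (a+4) := fun h => d3 (hinj h)
  have E3' : v (a+4) ≠ v a := E3.symm
  have E4 : v (a+2) ≠ v (a+1) := fun h => d4 (hinj h)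
  have E4' : v (a+1) ≠ v (a+2) := E4.symm
  have E5 : v (a+2) ≠ v (a+4) := fun h => d5 (hinj h)
  have E5' : v (a+4) ≠ v (a+2) := E5.symm
  have E6 : v (a+1) ≠ v (a+4) := fun h => d6 (hinj h)
  have E6' : v (a+4) ≠ v (a+1) := E6.symm
  have X0 : x ≠ v a := hx a
  have X0' : v a ≠ x := X0.symm
  have X2 : x ≠ v (a+2) := hx (a+2)
  have X2' : v (a+2) ≠ x := X2.symm
  have X1 : x ≠ v (a+1) := hx (a+1)
  have X1' : v (a+1) ≠ x := X1.symm
  have X4 : x ≠ v (a+4) := hx (a+4)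
  have X4' : v (a+4) ≠ x := X4.symm
  refine hban.false ⟨⟨![v a, x, v (a+2), v (a+1), v (a+4)], ?_⟩, ?_⟩
  · intro i j hij
    fin_cases i <;> fin_cases j <;>
      first
        | rfl
        | exact absurd hij (by assumption)
  · intro i j
    have hbAdj : ∀ i j : Fin 5, banner.Adj i j ↔ (i ≠ j ∧
        ((i, j) ∈ [((0 : Fin 5), 1), (1, 2), (2, 3), (3, 0), (0, 4)] ∨
         (j, i) ∈ [((0 : Fin 5), 1), (1, 2), (2, 3), (3, 0), (0, 4)])) := fun i j =>
      SimpleGraph.fromRel_adj _ _ _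
    fin_cases i <;> fin_cases j <;>
      first
        | exact iff_of_false G.irrefl (fun h => absurd ((hbAdj _ _).mp h) (by decide))
        | exact iff_of_true (by assumption) ((hbAdj _ _).mpr (by decide))
        | exact iff_of_false (by assumption) (fun h => absurd ((hbAdj _ _).mp h) (by decide))


theorem stmt_1 {V : Type*} (G : SimpleGraph V)
    (hp6 : _root_.Free (SimpleGraph.pathGraph 6) G) (hban : _root_.Free banner G)
    (v : Fin 5 → V) (hC5 : IsInducedC5 G v)
    (x : V) (hx : ∀ i, x ≠ v i)
    (h3 : ({j | G.Adj x (v j)} : Set (Fin 5)).ncard = 3) :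
    ∃ i : Fin 5, {j | G.Adj x (v j)} = ({i - 1, i, i + 1} : Set (Fin 5)) := by
  by_cases p0 : G.Adj x (v 0)
  · by_cases p1 : G.Adj x (v 1)
    · by_cases p2 : G.Adj x (v 2)
      · by_cases p3 : G.Adj x (v 3)
        · by_cases p4 : G.Adj x (v 4)
          · exfalso
            have hS : ({j | G.Adj x (v j)} : Set (Fin 5)) = ↑(({0, 1, 2, 3, 4} : Finset (Fin 5))) := by
              ext j; fin_cases j <;> simp [p0, p1, p2, p3, p4]
            rw [hS, Set.ncard_coe_finset] at h3
            exact absurd h3 (by decide)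
          · exfalso
            have hS : ({j | G.Adj x (v j)} : Set (Fin 5)) = ↑(({0, 1, 2, 3} : Finset (Fin 5))) := by
              ext j; fin_cases j <;> simp [p0, p1, p2, p3, p4]
            rw [hS, Set.ncard_coe_finset] at h3
            exact absurd h3 (by decide)
        · by_cases p4 : G.Adj x (v 4)
          · exfalso
            have hS : ({j | G.Adj x (v j)} : Set (Fin 5)) = ↑(({0, 1, 2, 4} : Finset (Fin 5))) := by
              ext j; fin_cases j <;> simp [p0, p1, p2, p3, p4]
            rw [hS, Set.ncard_coe_finset] at h3
            exact absurd h3 (by decide)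
          · refine ⟨1, ?_⟩
            ext j; fin_cases j <;> simp [p0, p1, p2, p3, p4] <;> decide
      · by_cases p3 : G.Adj x (v 3)
        · by_cases p4 : G.Adj x (v 4)
          · exfalso
            have hS : ({j | G.Adj x (v j)} : Set (Fin 5)) = ↑(({0, 1, 3, 4} : Finset (Fin 5))) := by
              ext j; fin_cases j <;> simp [p0, p1, p2, p3, p4]
            rw [hS, Set.ncard_coe_finset] at h3
            exact absurd h3 (by decide)
          · exact (no_bad G hban v hC5 x hx 3 0 4 2 (by decide) (by decide) (by decide) p3 p0 p4 p2).elim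
        · by_cases p4 : G.Adj x (v 4)
          · refine ⟨0, ?_⟩
            ext j; fin_cases j <;> simp [p0, p1, p2, p3, p4] <;> decide
          · exfalso
            have hS : ({j | G.Adj x (v j)} : Set (Fin 5)) = ↑(({0, 1} : Finset (Fin 5))) := by
              ext j; fin_cases j <;> simp [p0, p1, p2, p3, p4]
            rw [hS, Set.ncard_coe_finset] at h3
            exact absurd h3 (by decide)
    · by_cases p2 : G.Adj x (v 2)
      · by_cases p3 : G.Adj x (v 3)
        · by_cases p4 : G.Adj x (v 4)
          · exfalso
            have hS : ({j | G.Adj x (v j)} : Set (Fin 5)) = ↑(({0, 2, 3, 4} : Finset (Fin 5))) := by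
              ext j; fin_cases j <;> simp [p0, p1, p2, p3, p4]
            rw [hS, Set.ncard_coe_finset] at h3
            exact absurd h3 (by decide)
          · exact (no_bad G hban v hC5 x hx 0 2 1 4 (by decide) (by decide) (by decide) p0 p2 p1 p4).elim
        · by_cases p4 : G.Adj x (v 4)
          · exact (no_bad G hban v hC5 x hx 2 4 3 1 (by decide) (by decide) (by decide) p2 p4 p3 p1).elim
          · exfalso
            have hS : ({j | G.Adj x (v j)} : Set (Fin 5)) = ↑(({0, 2} : Finset (Fin 5))) := by
              ext j; fin_cases j <;> simp [p0, p1, p2, p3, p4]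
            rw [hS, Set.ncard_coe_finset] at h3
            exact absurd h3 (by decide)
      · by_cases p3 : G.Adj x (v 3)
        · by_cases p4 : G.Adj x (v 4)
          · refine ⟨4, ?_⟩
            ext j; fin_cases j <;> simp [p0, p1, p2, p3, p4] <;> decide
          · exfalso
            have hS : ({j | G.Adj x (v j)} : Set (Fin 5)) = ↑(({0, 3} : Finset (Fin 5))) := by
              ext j; fin_cases j <;> simp [p0, p1, p2, p3, p4]
            rw [hS, Set.ncard_coe_finset] at h3
            exact absurd h3 (by decide)
        · by_cases p4 : G.Adj x (v 4)
          · exfalso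
            have hS : ({j | G.Adj x (v j)} : Set (Fin 5)) = ↑(({0, 4} : Finset (Fin 5))) := by
              ext j; fin_cases j <;> simp [p0, p1, p2, p3, p4]
            rw [hS, Set.ncard_coe_finset] at h3
            exact absurd h3 (by decide)
          · exfalso
            have hS : ({j | G.Adj x (v j)} : Set (Fin 5)) = ↑(({0} : Finset (Fin 5))) := by
              ext j; fin_cases j <;> simp [p0, p1, p2, p3, p4]
            rw [hS, Set.ncard_coe_finset] at h3
            exact absurd h3 (by decide)
  · by_cases p1 : G.Adj x (v 1)
    · by_cases p2 : G.Adj x (v 2)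
      · by_cases p3 : G.Adj x (v 3)
        · by_cases p4 : G.Adj x (v 4)
          · exfalso
            have hS : ({j | G.Adj x (v j)} : Set (Fin 5)) = ↑(({1, 2, 3, 4} : Finset (Fin 5))) := by
              ext j; fin_cases j <;> simp [p0, p1, p2, p3, p4]
            rw [hS, Set.ncard_coe_finset] at h3
            exact absurd h3 (by decide)
          · refine ⟨2, ?_⟩
            ext j; fin_cases j <;> simp [p0, p1, p2, p3, p4] <;> decide
        · by_cases p4 : G.Adj x (v 4)
          · exact (no_bad G hban v hC5 x hx 4 1 0 3 (by decide) (by decide) (by decide) p4 p1 p0 p3).elim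
          · exfalso
            have hS : ({j | G.Adj x (v j)} : Set (Fin 5)) = ↑(({1, 2} : Finset (Fin 5))) := by
              ext j; fin_cases j <;> simp [p0, p1, p2, p3, p4]
            rw [hS, Set.ncard_coe_finset] at h3
            exact absurd h3 (by decide)
      · by_cases p3 : G.Adj x (v 3)
        · by_cases p4 : G.Adj x (v 4)
          · exact (no_bad G hban v hC5 x hx 1 3 2 0 (by decide) (by decide) (by decide) p1 p3 p2 p0).elim
          · exfalso
            have hS : ({j | G.Adj x (v j)} : Set (Fin 5)) = ↑(({1, 3} : Finset (Fin 5))) := by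
              ext j; fin_cases j <;> simp [p0, p1, p2, p3, p4]
            rw [hS, Set.ncard_coe_finset] at h3
            exact absurd h3 (by decide)
        · by_cases p4 : G.Adj x (v 4)
          · exfalso
            have hS : ({j | G.Adj x (v j)} : Set (Fin 5)) = ↑(({1, 4} : Finset (Fin 5))) := by
              ext j; fin_cases j <;> simp [p0, p1, p2, p3, p4]
            rw [hS, Set.ncard_coe_finset] at h3
            exact absurd h3 (by decide)
          · exfalso
            have hS : ({j | G.Adj x (v j)} : Set (Fin 5)) = ↑(({1} : Finset (Fin 5))) := by
              ext j; fin_cases j <;> simp [p0, p1, p2, p3, p4]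
            rw [hS, Set.ncard_coe_finset] at h3
            exact absurd h3 (by decide)
    · by_cases p2 : G.Adj x (v 2)
      · by_cases p3 : G.Adj x (v 3)
        · by_cases p4 : G.Adj x (v 4)
          · refine ⟨3, ?_⟩
            ext j; fin_cases j <;> simp [p0, p1, p2, p3, p4] <;> decide
          · exfalso
            have hS : ({j | G.Adj x (v j)} : Set (Fin 5)) = ↑(({2, 3} : Finset (Fin 5))) := by
              ext j; fin_cases j <;> simp [p0, p1, p2, p3, p4]
            rw [hS, Set.ncard_coe_finset] at h3
            exact absurd h3 (by decide)
        · by_cases p4 : G.Adj x (v 4)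
          · exfalso
            have hS : ({j | G.Adj x (v j)} : Set (Fin 5)) = ↑(({2, 4} : Finset (Fin 5))) := by
              ext j; fin_cases j <;> simp [p0, p1, p2, p3, p4]
            rw [hS, Set.ncard_coe_finset] at h3
            exact absurd h3 (by decide)
          · exfalso
            have hS : ({j | G.Adj x (v j)} : Set (Fin 5)) = ↑(({2} : Finset (Fin 5))) := by
              ext j; fin_cases j <;> simp [p0, p1, p2, p3, p4]
            rw [hS, Set.ncard_coe_finset] at h3
            exact absurd h3 (by decide)
      · by_cases p3 : G.Adj x (v 3)
        · by_cases p4 : G.Adj x (v 4)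
          · exfalso
            have hS : ({j | G.Adj x (v j)} : Set (Fin 5)) = ↑(({3, 4} : Finset (Fin 5))) := by
              ext j; fin_cases j <;> simp [p0, p1, p2, p3, p4]
            rw [hS, Set.ncard_coe_finset] at h3
            exact absurd h3 (by decide)
          · exfalso
            have hS : ({j | G.Adj x (v j)} : Set (Fin 5)) = ↑(({3} : Finset (Fin 5))) := by
              ext j; fin_cases j <;> simp [p0, p1, p2, p3, p4]
            rw [hS, Set.ncard_coe_finset] at h3
            exact absurd h3 (by decide)
        · by_cases p4 : G.Adj x (v 4)
          · exfalso
            have hS : ({j | G.Adj x (v j)} : Set (Fin 5)) = ↑(({4} : Finset (Fin 5))) := by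
              ext j; fin_cases j <;> simp [p0, p1, p2, p3, p4]
            rw [hS, Set.ncard_coe_finset] at h3
            exact absurd h3 (by decide)
          · exfalso
            have hS : ({j | G.Adj x (v j)} : Set (Fin 5)) = ↑((∅ : Finset (Fin 5))) := by
              ext j; fin_cases j <;> simp [p0, p1, p2, p3, p4]
            rw [hS, Set.ncard_coe_finset] at h3
            exact absurd h3 (by decide)
end

section
/- Let G be a (P6, banner)-free graph, let H be an induced house in G with vertex set {v1,v2,v3,v4,v5} and edges v1v2, v2v3, v3v4, v4v1, v2v5, v3v5, and let Q be a connected subset of vertices disjoint from H and with no vertex of Q adjacent to any vertex of H. If a vertex x has exactly one neighbor on H and has a neighbor in Q, then a contradiction arises; i.e., no vertex with a neighbor in Q has exactly one neighbor on H. -/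
open SimpleGraph

section evalAux
variable {α : Type*} (a b c d e f : α)
lemma ev50 : ![a,b,c,d,e] 0 = a := rfl
lemma ev51 : ![a,b,c,d,e] 1 = b := rfl
lemma ev52 : ![a,b,c,d,e] 2 = c := rfl
lemma ev53 : ![a,b,c,d,e] 3 = d := rfl
lemma ev54 : ![a,b,c,d,e] 4 = e := rfl
lemma ev60 : ![a,b,c,d,e,f] 0 = a := rfl
lemma ev61 : ![a,b,c,d,e,f] 1 = b := rfl
lemma ev62 : ![a,b,c,d,e,f] 2 = c := rfl
lemma ev63 : ![a,b,c,d,e,f] 3 = d := rfl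
lemma ev64 : ![a,b,c,d,e,f] 4 = e := rfl
lemma ev65 : ![a,b,c,d,e,f] 5 = f := rfl
lemma em60 : ![a,b,c,d,e,f] ⟨0, by omega⟩ = a := rfl
lemma em61 : ![a,b,c,d,e,f] ⟨1, by omega⟩ = b := rfl
lemma em62 : ![a,b,c,d,e,f] ⟨2, by omega⟩ = c := rfl
lemma em63 : ![a,b,c,d,e,f] ⟨3, by omega⟩ = d := rfl
lemma em64 : ![a,b,c,d,e,f] ⟨4, by omega⟩ = e := rfl
lemma em65 : ![a,b,c,d,e,f] ⟨5, by omega⟩ = f := rfl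
end evalAux

set_option maxHeartbeats 1000000 in
theorem stmt_3 {V : Type*} (G : SimpleGraph V)
    (hp6 : _root_.Free (SimpleGraph.pathGraph 6) G) (hban : _root_.Free banner G)
    (v : Fin 5 → V) (hH : IsInducedHouse G v)
    (Q : Set V) (hQconn : (G.induce Q).Connected) (hQ : Anticomplete5 G Q v)
    (x : V) (h1 : ({j | G.Adj x (v j)} : Set (Fin 5)).ncard = 1)
    (hxQ : ∃ q ∈ Q, G.Adj x q) :
    False := by
  
  obtain ⟨hinj, hvadj⟩ := hH
  obtain ⟨j0, hj0⟩ := Set.ncard_eq_one.mp h1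
  have hx' : ∀ j, G.Adj x (v j) ↔ j = j0 := by
    intro j
    have := Set.ext_iff.mp hj0 j
    simpa using this
  have hx'' : ∀ j, G.Adj (v j) x ↔ j = j0 := fun j => by rw [G.adj_comm]; exact hx' j
  obtain ⟨q, hqQ, hxq⟩ := hxQ
  have hqv : ∀ i, ¬ G.Adj q (v i) := fun i => hQ.2 q hqQ i
  have hqv' : ∀ i, ¬ G.Adj (v i) q := fun i h => hqv i h.symm
  have hxne : ∀ i, x ≠ v i := by
    intro i hxe
    have A : ∀ j, G.Adj (v i) (v j) ↔ j = j0 := by intro j; rw [← hxe]; exact hx' j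
    have key : ∀ a b : Fin 5, a ≠ b → G.Adj (v i) (v a) → G.Adj (v i) (v b) → False :=
      fun a b hab ha hb => hab (((A a).mp ha).trans ((A b).mp hb).symm)
    fin_cases i
    · exact key 1 3 (by decide) (by rw [hvadj]; decide) (by rw [hvadj]; decide)
    · exact key 0 2 (by decide) (by rw [hvadj]; decide) (by rw [hvadj]; decide)
    · exact key 1 3 (by decide) (by rw [hvadj]; decide) (by rw [hvadj]; decide)
    · exact key 0 2 (by decide) (by rw [hvadj]; decide) (by rw [hvadj]; decide)
    · exact key 1 2 (by decide) (by rw [hvadj]; decide) (by rw [hvadj]; decide)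
  have hqne : ∀ i, q ≠ v i := fun i e => hQ.1 i (e ▸ hqQ)
  have hxqne : x ≠ q := G.ne_of_adj hxq
  have hqx : G.Adj q x := hxq.symm
  fin_cases j0
  · refine hban.elim' ⟨⟨![v 0, v 1, v 2, v 3, x], ?_⟩, @fun a b => ?_⟩
    · intro a b hab
      fin_cases a <;> fin_cases b <;>
        simp only [ev50, ev51, ev52, ev53, ev54] at hab ⊢ <;>
        first
        | rfl
        | exact absurd (hinj hab) (by decide)
        | exact (hxne _ hab.symm).elim
        | exact (hxne _ hab).elim
    · fin_cases a <;> fin_cases b <;>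
        simp [Function.Embedding.coeFn_mk, DFunLike.coe, ev50, ev51, ev52, ev53, ev54,
          banner, SimpleGraph.fromRel_adj, hvadj, hx', hx'']
  · refine hban.elim' ⟨⟨![v 1, v 2, v 3, v 0, x], ?_⟩, @fun a b => ?_⟩
    · intro a b hab
      fin_cases a <;> fin_cases b <;>
        simp only [ev50, ev51, ev52, ev53, ev54] at hab ⊢ <;>
        first
        | rfl
        | exact absurd (hinj hab) (by decide)
        | exact (hxne _ hab.symm).elim
        | exact (hxne _ hab).elim
    · fin_cases a <;> fin_cases b <;>
        simp [Function.Embedding.coeFn_mk, DFunLike.coe, ev50, ev51, ev52, ev53, ev54,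
          banner, SimpleGraph.fromRel_adj, hvadj, hx', hx'']
  · refine hban.elim' ⟨⟨![v 2, v 3, v 0, v 1, x], ?_⟩, @fun a b => ?_⟩
    · intro a b hab
      fin_cases a <;> fin_cases b <;>
        simp only [ev50, ev51, ev52, ev53, ev54] at hab ⊢ <;>
        first
        | rfl
        | exact absurd (hinj hab) (by decide)
        | exact (hxne _ hab.symm).elim
        | exact (hxne _ hab).elim
    · fin_cases a <;> fin_cases b <;>
        simp [Function.Embedding.coeFn_mk, DFunLike.coe, ev50, ev51, ev52, ev53, ev54,
          banner, SimpleGraph.fromRel_adj, hvadj, hx', hx'']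
  · refine hban.elim' ⟨⟨![v 3, v 0, v 1, v 2, x], ?_⟩, @fun a b => ?_⟩
    · intro a b hab
      fin_cases a <;> fin_cases b <;>
        simp only [ev50, ev51, ev52, ev53, ev54] at hab ⊢ <;>
        first
        | rfl
        | exact absurd (hinj hab) (by decide)
        | exact (hxne _ hab.symm).elim
        | exact (hxne _ hab).elim
    · fin_cases a <;> fin_cases b <;>
        simp [Function.Embedding.coeFn_mk, DFunLike.coe, ev50, ev51, ev52, ev53, ev54,
          banner, SimpleGraph.fromRel_adj, hvadj, hx', hx'']
  · refine hp6.elim' ⟨⟨![q, x, v 4, v 1, v 0, v 3], ?_⟩, @fun a b => ?_⟩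
    · intro a b hab
      fin_cases a <;> fin_cases b <;>
        simp only [ev60, ev61, ev62, ev63, ev64, ev65, em60, em61, em62, em63, em64,
          em65] at hab ⊢ <;>
        first
        | rfl
        | exact absurd (hinj hab) (by decide)
        | exact (hxne _ hab.symm).elim
        | exact (hxne _ hab).elim
        | exact (hqne _ hab.symm).elim
        | exact (hqne _ hab).elim
        | exact (hxqne hab).elim
        | exact (hxqne hab.symm).elim
    · fin_cases a <;> fin_cases b <;>
        simp [Function.Embedding.coeFn_mk, DFunLike.coe, ev60, ev61, ev62, ev63, ev64, ev65,
          em60, em61, em62, em63, em64, em65,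
          SimpleGraph.pathGraph_adj, hvadj, hx', hx'', hqv, hqv', hxq, hqx, hxqne,
          G.irrefl] <;> decide
end

section
/- Let G be a (P6, banner, C5)-free graph, let H be an induced house with vertices v1,...,v5 (4-cycle v1v2v3v4 plus v5 adjacent to v2, v3), and let Q be a connected vertex set disjoint from and anticomplete to H. If a vertex x has exactly two neighbors on H and also has a neighbor in Q, then N_H(x) = {v2, v3} or N_H(x) = {v1, v4}. -/
open SimpleGraph

set_option maxRecDepth 8000 in
lemma banner_free_ne {V : Type*} {G : SimpleGraph V} (hban : _root_.Free banner G)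
    (a b c d e : V) (hbd' : b ≠ d)
    (hab : G.Adj a b) (hbc : G.Adj b c) (hcd : G.Adj c d) (hda : G.Adj d a) (hae : G.Adj a e)
    (hac : ¬G.Adj a c) (hbd : ¬G.Adj b d) (hbe : ¬G.Adj b e) (hce : ¬G.Adj c e)
    (hde : ¬G.Adj d e) : False := by
  have nab : a ≠ b := hab.ne
  have nbc : b ≠ c := hbc.ne
  have ncd : c ≠ d := hcd.ne
  have nda : d ≠ a := hda.ne
  have nae : a ≠ e := hae.ne
  have nac : a ≠ c := fun h => hce (h ▸ hae)
  have nbe : b ≠ e := fun h => hce (h ▸ hbc.symm)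
  have nce : c ≠ e := fun h => hac (h ▸ hae)
  have nde : d ≠ e := fun h => hce (h ▸ hcd)
  refine hban.false (⟨⟨![a, b, c, d, e], ?_⟩, ?_⟩ : banner ↪g G)
  · intro i j hij
    fin_cases i <;> fin_cases j <;> simp_all
  · intro i j
    fin_cases i <;> fin_cases j <;>
      simp_all [banner, SimpleGraph.fromRel_adj, G.adj_comm] <;> tauto

set_option maxHeartbeats 1600000 in
lemma p6_free_ne {V : Type*} {G : SimpleGraph V} (hp6 : _root_.Free (SimpleGraph.pathGraph 6) G)
    (a b c d e f : V)
    (hab : G.Adj a b) (hbc : G.Adj b c) (hcd : G.Adj c d) (hde : G.Adj d e) (hef : G.Adj e f)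
    (hac : ¬G.Adj a c) (had : ¬G.Adj a d) (hae : ¬G.Adj a e) (haf : ¬G.Adj a f)
    (hbd : ¬G.Adj b d) (hbe : ¬G.Adj b e) (hbf : ¬G.Adj b f)
    (hce : ¬G.Adj c e) (hcf : ¬G.Adj c f) (hdf : ¬G.Adj d f) : False := by
  have nab : a ≠ b := hab.ne
  have nbc : b ≠ c := hbc.ne
  have ncd : c ≠ d := hcd.ne
  have nde : d ≠ e := hde.ne
  have nef : e ≠ f := hef.ne
  have nac : a ≠ c := fun h => had (h ▸ hcd)
  have nbd : b ≠ d := fun h => hbe (h ▸ hde)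
  have nce : c ≠ e := fun h => hcf (h ▸ hef)
  have ndf : d ≠ f := fun h => hcf (h ▸ hcd)
  have nad : a ≠ d := fun h => hbd (h ▸ hab.symm)
  have nbe : b ≠ e := fun h => hce (h ▸ hbc.symm)
  have ncf : c ≠ f := fun h => hdf (h ▸ hcd.symm)
  have nae : a ≠ e := fun h => hbe (h ▸ hab.symm)
  have nbf : b ≠ f := fun h => hcf (h ▸ hbc.symm)
  have naf : a ≠ f := fun h => hbf (h ▸ hab.symm)
  have hba := hab.symm; have hcb := hbc.symm; have hdc := hcd.symm
  have hed := hde.symm; have hfe := hef.symm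
  have hca : ¬G.Adj c a := fun h => hac h.symm
  have hda : ¬G.Adj d a := fun h => had h.symm
  have hea : ¬G.Adj e a := fun h => hae h.symm
  have hfa : ¬G.Adj f a := fun h => haf h.symm
  have hdb : ¬G.Adj d b := fun h => hbd h.symm
  have heb : ¬G.Adj e b := fun h => hbe h.symm
  have hfb : ¬G.Adj f b := fun h => hbf h.symm
  have hec : ¬G.Adj e c := fun h => hce h.symm
  have hfc : ¬G.Adj f c := fun h => hcf h.symm
  have hfd : ¬G.Adj f d := fun h => hdf h.symm
  refine hp6.false (⟨⟨![a, b, c, d, e, f], ?_⟩, ?_⟩ : SimpleGraph.pathGraph 6 ↪g G)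
  · intro i j hij
    fin_cases i <;> fin_cases j <;> first
      | rfl
      | (simp only [Matrix.cons_val_zero, Matrix.cons_val_one, Matrix.head_cons,
          Matrix.cons_val_succ, Matrix.cons_val_fin_one] at hij;
         first | exact absurd hij ‹_› | exact absurd hij.symm ‹_›)
  · intro i j
    fin_cases i <;> fin_cases j <;>
      simp only [Matrix.cons_val_zero, Matrix.cons_val_one, Matrix.head_cons,
        Matrix.cons_val_succ, Matrix.cons_val_fin_one, SimpleGraph.pathGraph_adj] <;>
      norm_num <;> first | exact G.irrefl | assumption

set_option maxHeartbeats 1600000 in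
theorem stmt_4 {V : Type*} (G : SimpleGraph V)
    (hp6 : _root_.Free (SimpleGraph.pathGraph 6) G) (hban : _root_.Free banner G)
    (hc5 : _root_.Free cycle5 G)
    (v : Fin 5 → V) (hH : IsInducedHouse G v)
    (Q : Set V) (hQconn : (G.induce Q).Connected) (hQ : Anticomplete5 G Q v)
    (x : V) (h2 : ({j | G.Adj x (v j)} : Set (Fin 5)).ncard = 2)
    (hxQ : ∃ q ∈ Q, G.Adj x q) :
    {j | G.Adj x (v j)} = ({1, 2} : Set (Fin 5)) ∨
      {j | G.Adj x (v j)} = ({0, 3} : Set (Fin 5)) := by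

  obtain ⟨hvinj, hvadj⟩ := hH
  obtain ⟨q, hqQ, hxq⟩ := hxQ
  have hqadj : ∀ i, ¬ G.Adj q (v i) := fun i => hQ.2 q hqQ i
  have nq : ∀ i, ¬ G.Adj (v i) q := fun i h => hqadj i h.symm
  have e01 : G.Adj (v 0) (v 1) := (hvadj 0 1).mpr (by decide)
  have e12 : G.Adj (v 1) (v 2) := (hvadj 1 2).mpr (by decide)
  have e23 : G.Adj (v 2) (v 3) := (hvadj 2 3).mpr (by decide)
  have e30 : G.Adj (v 3) (v 0) := (hvadj 3 0).mpr (by decide)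
  have e14 : G.Adj (v 1) (v 4) := (hvadj 1 4).mpr (by decide)
  have e24 : G.Adj (v 2) (v 4) := (hvadj 2 4).mpr (by decide)
  have n02 : ¬G.Adj (v 0) (v 2) := fun h => by have := (hvadj 0 2).mp h; revert this; decide
  have n13 : ¬G.Adj (v 1) (v 3) := fun h => by have := (hvadj 1 3).mp h; revert this; decide
  have n04 : ¬G.Adj (v 0) (v 4) := fun h => by have := (hvadj 0 4).mp h; revert this; decide
  have n34 : ¬G.Adj (v 3) (v 4) := fun h => by have := (hvadj 3 4).mp h; revert this; decide
  have hvne : ∀ i j : Fin 5, i ≠ j → v i ≠ v j := fun i j h hh => h (hvinj hh)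
  obtain ⟨a, b, hne, hS⟩ := Set.ncard_eq_two.mp h2
  have key : ∀ i : Fin 5, G.Adj x (v i) ↔ i = a ∨ i = b := fun i => by
    have := Set.ext_iff.mp hS i; simpa using this
  have no01 : G.Adj x (v 0) → ¬G.Adj x (v 2) → ¬G.Adj x (v 3) → ¬G.Adj x (v 4) → False :=
    fun hx0 hnx2 hnx3 hnx4 =>
      p6_free_ne hp6 q x (v 0) (v 3) (v 2) (v 4) hxq.symm hx0 e30.symm e23.symm e24
        (hqadj 0) (hqadj 3) (hqadj 2) (hqadj 4) hnx3 hnx2 hnx4 n02 n04 n34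
  have no23 : G.Adj x (v 3) → ¬G.Adj x (v 0) → ¬G.Adj x (v 1) → ¬G.Adj x (v 4) → False :=
    fun hx3 hnx0 hnx1 hnx4 =>
      p6_free_ne hp6 q x (v 3) (v 0) (v 1) (v 4) hxq.symm hx3 e30 e01 e14
        (hqadj 3) (hqadj 0) (hqadj 1) (hqadj 4) hnx0 hnx1 hnx4
        (fun h => n13 h.symm) n34 n04
  have no02 : G.Adj x (v 0) → G.Adj x (v 2) → ¬G.Adj x (v 3) → False :=
    fun hx0 hx2 hnx3 =>
      banner_free_ne hban x (v 0) (v 3) (v 2) q (hvne 0 2 (by decide))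
        hx0 e30.symm e23.symm hx2.symm hxq hnx3 n02 (nq 0) (nq 3) (nq 2)
  have no13 : G.Adj x (v 1) → G.Adj x (v 3) → ¬G.Adj x (v 0) → False :=
    fun hx1 hx3 hnx0 =>
      banner_free_ne hban x (v 1) (v 0) (v 3) q (hvne 1 3 (by decide))
        hx1 e01.symm e30.symm hx3.symm hxq hnx0 n13 (nq 1) (nq 0) (nq 3)
  have no04 : G.Adj x (v 0) → G.Adj x (v 4) → ¬G.Adj x (v 1) → False :=
    fun hx0 hx4 hnx1 =>
      banner_free_ne hban x (v 0) (v 1) (v 4) q (hvne 0 4 (by decide))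
        hx0 e01 e14 hx4.symm hxq hnx1 n04 (nq 0) (nq 1) (nq 4)
  have no34 : G.Adj x (v 3) → G.Adj x (v 4) → ¬G.Adj x (v 2) → False :=
    fun hx3 hx4 hnx2 =>
      banner_free_ne hban x (v 3) (v 2) (v 4) q (hvne 3 4 (by decide))
        hx3 e23.symm e24 hx4.symm hxq hnx2 n34 (nq 3) (nq 2) (nq 4)
  have no14 : G.Adj x (v 1) → ¬G.Adj x (v 0) → ¬G.Adj x (v 2) → ¬G.Adj x (v 3) → False :=
    fun hx1 hnx0 hnx2 hnx3 =>
      banner_free_ne hban (v 1) (v 2) (v 3) (v 0) x (hvne 2 0 (by decide))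
        e12 e23 e30 e01 hx1.symm n13 (fun h => n02 h.symm)
        (fun h => hnx2 h.symm) (fun h => hnx3 h.symm) (fun h => hnx0 h.symm)
  have no24 : G.Adj x (v 2) → ¬G.Adj x (v 0) → ¬G.Adj x (v 1) → ¬G.Adj x (v 3) → False :=
    fun hx2 hnx0 hnx1 hnx3 =>
      banner_free_ne hban (v 2) (v 1) (v 0) (v 3) x (hvne 1 3 (by decide))
        e12.symm e01.symm e30.symm e23.symm hx2.symm (fun h => n02 h.symm) n13
        (fun h => hnx1 h.symm) (fun h => hnx0 h.symm) (fun h => hnx3 h.symm)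
  have hx : ∀ i : Fin 5, (i = a ∨ i = b) → G.Adj x (v i) := fun i h => (key i).mpr h
  have hnx : ∀ i : Fin 5, ¬(i = a ∨ i = b) → ¬G.Adj x (v i) := fun i h hh => h ((key i).mp hh)
  fin_cases a <;> fin_cases b
  · exact absurd rfl hne
  · exact ((no01 (hx 0 (by decide)) (hnx 2 (by decide)) (hnx 3 (by decide))
      (hnx 4 (by decide)))).elim
  · exact ((no02 (hx 0 (by decide)) (hx 2 (by decide)) (hnx 3 (by decide)))).elim
  · exact Or.inr (Set.ext fun j => by simp only [Set.mem_setOf_eq, key, Set.mem_insert_iff, Set.mem_singleton_iff]; revert j; decide)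
  · exact ((no04 (hx 0 (by decide)) (hx 4 (by decide)) (hnx 1 (by decide)))).elim
  · exact ((no01 (hx 0 (by decide)) (hnx 2 (by decide)) (hnx 3 (by decide))
      (hnx 4 (by decide)))).elim
  · exact absurd rfl hne
  · exact Or.inl (Set.ext fun j => by simp only [Set.mem_setOf_eq, key, Set.mem_insert_iff, Set.mem_singleton_iff]; revert j; decide)
  · exact ((no13 (hx 1 (by decide)) (hx 3 (by decide)) (hnx 0 (by decide)))).elim
  · exact ((no14 (hx 1 (by decide)) (hnx 0 (by decide)) (hnx 2 (by decide))
      (hnx 3 (by decide)))).elim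
  · exact ((no02 (hx 0 (by decide)) (hx 2 (by decide)) (hnx 3 (by decide)))).elim
  · exact Or.inl (Set.ext fun j => by simp only [Set.mem_setOf_eq, key, Set.mem_insert_iff, Set.mem_singleton_iff]; revert j; decide)
  · exact absurd rfl hne
  · exact ((no23 (hx 3 (by decide)) (hnx 0 (by decide)) (hnx 1 (by decide))
      (hnx 4 (by decide)))).elim
  · exact ((no24 (hx 2 (by decide)) (hnx 0 (by decide)) (hnx 1 (by decide))
      (hnx 3 (by decide)))).elim
  · exact Or.inr (Set.ext fun j => by simp only [Set.mem_setOf_eq, key, Set.mem_insert_iff, Set.mem_singleton_iff]; revert j; decide)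
  · exact ((no13 (hx 1 (by decide)) (hx 3 (by decide)) (hnx 0 (by decide)))).elim
  · exact ((no23 (hx 3 (by decide)) (hnx 0 (by decide)) (hnx 1 (by decide))
      (hnx 4 (by decide)))).elim
  · exact absurd rfl hne
  · exact ((no34 (hx 3 (by decide)) (hx 4 (by decide)) (hnx 2 (by decide)))).elim
  · exact ((no04 (hx 0 (by decide)) (hx 4 (by decide)) (hnx 1 (by decide)))).elim
  · exact ((no14 (hx 1 (by decide)) (hnx 0 (by decide)) (hnx 2 (by decide))
      (hnx 3 (by decide)))).elim
  · exact ((no24 (hx 2 (by decide)) (hnx 0 (by decide)) (hnx 1 (by decide))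
      (hnx 3 (by decide)))).elim
  · exact ((no34 (hx 3 (by decide)) (hx 4 (by decide)) (hnx 2 (by decide)))).elim
  · exact absurd rfl hne
end

section
/- Let G be a (P6, banner, C5)-free graph, H an induced house with vertices v1,...,v5 (4-cycle v1v2v3v4 plus v5 adjacent to v2, v3), and Q a connected vertex set disjoint from and anticomplete to H. Let B1 be the set of vertices x with N_H(x) = {v2,v3} and having a neighbor in Q, and B2 the set of vertices x with N_H(x) = {v1,v4} and having a neighbor in Q. Then B1 and B2 cannot both be nonempty. -/
open SimpleGraph

instance : DecidableRel banner.Adj := fun a b =>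
  decidable_of_iff _ (SimpleGraph.fromRel_adj _ a b).symm

instance : DecidableRel cycle5.Adj := fun a b =>
  decidable_of_iff _ (SimpleGraph.fromRel_adj _ a b).symm

instance : DecidableRel (SimpleGraph.pathGraph 6).Adj := fun a b =>
  decidable_of_iff _ (SimpleGraph.pathGraph_adj).symm

lemma free_contra {W V : Type*} {F : SimpleGraph W} {G : SimpleGraph V} (hF : _root_.Free F G)
    (f : W → V) (hinj : Function.Injective f)
    (h : ∀ a b, G.Adj (f a) (f b) ↔ F.Adj a b) : False :=
  hF.false ⟨⟨f, hinj⟩, h _ _⟩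

lemma cycle5_contra {V : Type*} {G : SimpleGraph V} (hc5 : _root_.Free cycle5 G)
    (x0 x1 x2 x3 x4 : V)
    (e01 : G.Adj x0 x1) (e12 : G.Adj x1 x2) (e23 : G.Adj x2 x3) (e34 : G.Adj x3 x4)
    (e40 : G.Adj x4 x0)
    (n02 : ¬ G.Adj x0 x2) (n03 : ¬ G.Adj x0 x3) (n13 : ¬ G.Adj x1 x3)
    (n14 : ¬ G.Adj x1 x4) (n24 : ¬ G.Adj x2 x4)
    (d02 : x0 ≠ x2) (d03 : x0 ≠ x3) (d13 : x1 ≠ x3) (d14 : x1 ≠ x4) (d24 : x2 ≠ x4) : False := by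
  have d01 := e01.ne; have d12 := e12.ne; have d23 := e23.ne; have d34 := e34.ne
  have d40 := e40.ne
  refine free_contra hc5 ![x0, x1, x2, x3, x4] ?_ ?_
  · intro i j hij
    fin_cases i <;> fin_cases j <;> simp_all
  · intro a b
    fin_cases a <;> fin_cases b <;>
      simp only [Matrix.cons_val_zero, Matrix.cons_val_one, Matrix.head_cons,
        Matrix.cons_val_succ] <;>
      first
      | exact iff_of_true (by solve_by_elim [SimpleGraph.Adj.symm]) (by decide)
      | exact iff_of_false (fun hx => by solve_by_elim [SimpleGraph.Adj.symm,
          SimpleGraph.irrefl]) (by decide)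

lemma banner_contra {V : Type*} {G : SimpleGraph V} (hban : _root_.Free banner G)
    (x0 x1 x2 x3 x4 : V)
    (e01 : G.Adj x0 x1) (e12 : G.Adj x1 x2) (e23 : G.Adj x2 x3) (e30 : G.Adj x3 x0)
    (e04 : G.Adj x0 x4)
    (n02 : ¬ G.Adj x0 x2) (n13 : ¬ G.Adj x1 x3) (n14 : ¬ G.Adj x1 x4)
    (n24 : ¬ G.Adj x2 x4) (n34 : ¬ G.Adj x3 x4)
    (d02 : x0 ≠ x2) (d13 : x1 ≠ x3) (d14 : x1 ≠ x4) (d24 : x2 ≠ x4) (d34 : x3 ≠ x4) : False := by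
  have d01 := e01.ne; have d12 := e12.ne; have d23 := e23.ne; have d30 := e30.ne
  have d04 := e04.ne
  refine free_contra hban ![x0, x1, x2, x3, x4] ?_ ?_
  · intro i j hij
    fin_cases i <;> fin_cases j <;> simp_all
  · intro a b
    fin_cases a <;> fin_cases b <;>
      simp only [Matrix.cons_val_zero, Matrix.cons_val_one, Matrix.head_cons,
        Matrix.cons_val_succ] <;>
      first
      | exact iff_of_true (by solve_by_elim [SimpleGraph.Adj.symm]) (by decide)
      | exact iff_of_false (fun hx => by solve_by_elim [SimpleGraph.Adj.symm,
          SimpleGraph.irrefl]) (by decide)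

set_option maxRecDepth 2000 in
set_option maxHeartbeats 2000000 in
lemma p6_contra {V : Type*} {G : SimpleGraph V} (hp6 : _root_.Free (SimpleGraph.pathGraph 6) G)
    (x0 x1 x2 x3 x4 x5 : V)
    (e01 : G.Adj x0 x1) (e12 : G.Adj x1 x2) (e23 : G.Adj x2 x3) (e34 : G.Adj x3 x4)
    (e45 : G.Adj x4 x5)
    (n02 : ¬ G.Adj x0 x2) (n03 : ¬ G.Adj x0 x3) (n04 : ¬ G.Adj x0 x4) (n05 : ¬ G.Adj x0 x5)
    (n13 : ¬ G.Adj x1 x3) (n14 : ¬ G.Adj x1 x4) (n15 : ¬ G.Adj x1 x5)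
    (n24 : ¬ G.Adj x2 x4) (n25 : ¬ G.Adj x2 x5) (n35 : ¬ G.Adj x3 x5)
    (d02 : x0 ≠ x2) (d03 : x0 ≠ x3) (d04 : x0 ≠ x4) (d05 : x0 ≠ x5)
    (d13 : x1 ≠ x3) (d14 : x1 ≠ x4) (d15 : x1 ≠ x5)
    (d24 : x2 ≠ x4) (d25 : x2 ≠ x5) (d35 : x3 ≠ x5) : False := by
  have d01 := e01.ne; have d12 := e12.ne; have d23 := e23.ne; have d34 := e34.ne
  have d45 := e45.ne
  refine free_contra hp6 ![x0, x1, x2, x3, x4, x5] ?_ ?_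
  · intro i j hij
    fin_cases i <;> fin_cases j <;>
      simp only [Matrix.cons_val_zero, Matrix.cons_val_one, Matrix.head_cons,
        Matrix.cons_val_succ] at hij <;>
      first
      | rfl
      | exact absurd hij (by assumption)
      | exact absurd hij.symm (by assumption)
  · intro a b
    fin_cases a <;> fin_cases b <;>
      simp only [Matrix.cons_val_zero, Matrix.cons_val_one, Matrix.head_cons,
        Matrix.cons_val_succ] <;>
      first
      | exact iff_of_true (by solve_by_elim [SimpleGraph.Adj.symm]) (by decide)
      | exact iff_of_false (fun hx => by solve_by_elim [SimpleGraph.Adj.symm,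
          SimpleGraph.irrefl]) (by decide)

theorem stmt_5 {V : Type*} (G : SimpleGraph V)
    (hp6 : _root_.Free (SimpleGraph.pathGraph 6) G) (hban : _root_.Free banner G)
    (hc5 : _root_.Free cycle5 G)
    (v : Fin 5 → V) (hH : IsInducedHouse G v)
    (Q : Set V) (hQconn : (G.induce Q).Connected) (hQ : Anticomplete5 G Q v) :
    ¬ (({x | {j | G.Adj x (v j)} = ({1, 2} : Set (Fin 5)) ∧ ∃ q ∈ Q, G.Adj x q} : Set V).Nonempty ∧
       ({x | {j | G.Adj x (v j)} = ({0, 3} : Set (Fin 5)) ∧ ∃ q ∈ Q, G.Adj x q} : Set V).Nonempty) := by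
  classical
  obtain ⟨hvinj, hadj⟩ := hH
  rintro ⟨⟨b1, hb1, q1', hq1'Q, hb1q⟩, ⟨b2, hb2, q2', hq2'Q, hb2q⟩⟩
  have A : ∀ i j : Fin 5, ((i, j) ∈ [((0 : Fin 5), 1), (1, 2), (2, 3), (3, 0), (1, 4), (2, 4)] ∨
     (j, i) ∈ [((0 : Fin 5), 1), (1, 2), (2, 3), (3, 0), (1, 4), (2, 4)]) → G.Adj (v i) (v j) :=
    fun i j h => (hadj i j).mpr h
  have N : ∀ i j : Fin 5, ¬ ((i, j) ∈ [((0 : Fin 5), 1), (1, 2), (2, 3), (3, 0), (1, 4), (2, 4)] ∨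
     (j, i) ∈ [((0 : Fin 5), 1), (1, 2), (2, 3), (3, 0), (1, 4), (2, 4)]) → ¬ G.Adj (v i) (v j) :=
    fun i j h ha => h ((hadj i j).mp ha)
  have a01 := A 0 1 (by decide)
  have a12 := A 1 2 (by decide)
  have a23 := A 2 3 (by decide)
  have a30 := A 3 0 (by decide)
  have a14 := A 1 4 (by decide)
  have a24 := A 2 4 (by decide)
  have n02 := N 0 2 (by decide)
  have n13 := N 1 3 (by decide)
  have n04 := N 0 4 (by decide)
  have n34 := N 3 4 (by decide)
  have hb1j : ∀ j : Fin 5, G.Adj b1 (v j) ↔ (j = 1 ∨ j = 2) := by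
    intro j
    constructor
    · intro h
      have : j ∈ ({1, 2} : Set (Fin 5)) := hb1 ▸ h
      simpa using this
    · intro h
      have : j ∈ ({1, 2} : Set (Fin 5)) := by simpa using h
      rw [← hb1] at this
      exact this
  have hb2j : ∀ j : Fin 5, G.Adj b2 (v j) ↔ (j = 0 ∨ j = 3) := by
    intro j
    constructor
    · intro h
      have : j ∈ ({0, 3} : Set (Fin 5)) := hb2 ▸ h
      simpa using this
    · intro h
      have : j ∈ ({0, 3} : Set (Fin 5)) := by simpa using h
      rw [← hb2] at this
      exact this
  have b1v1 : G.Adj b1 (v 1) := (hb1j 1).mpr (Or.inl rfl)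
  have b1v2 : G.Adj b1 (v 2) := (hb1j 2).mpr (Or.inr rfl)
  have b1n0 : ¬ G.Adj b1 (v 0) := fun h => by have := (hb1j 0).mp h; simp at this
  have b1n3 : ¬ G.Adj b1 (v 3) := fun h => by have := (hb1j 3).mp h; simp at this
  have b1n4 : ¬ G.Adj b1 (v 4) := fun h => by have := (hb1j 4).mp h; simp at this
  have b2v0 : G.Adj b2 (v 0) := (hb2j 0).mpr (Or.inl rfl)
  have b2v3 : G.Adj b2 (v 3) := (hb2j 3).mpr (Or.inr rfl)
  have b2n1 : ¬ G.Adj b2 (v 1) := fun h => by have := (hb2j 1).mp h; simp at this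
  have b2n2 : ¬ G.Adj b2 (v 2) := fun h => by have := (hb2j 2).mp h; simp at this
  have b2n4 : ¬ G.Adj b2 (v 4) := fun h => by have := (hb2j 4).mp h; simp at this
  have hQv : ∀ x ∈ Q, ∀ i, ¬ G.Adj x (v i) := hQ.2
  have hQnv : ∀ i, v i ∉ Q := hQ.1
  have b1nv : ∀ i : Fin 5, b1 ≠ v i := by
    intro i h
    fin_cases i
    · exact b1n3 (h ▸ a30.symm)
    · exact b1n0 (h ▸ a01.symm)
    · exact b1n3 (h ▸ a23)
    · exact b1n0 (h ▸ a30)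
    · exact hQv q1' hq1'Q 4 ((h ▸ hb1q).symm)
  have b2nv : ∀ i : Fin 5, b2 ≠ v i := by
    intro i h
    fin_cases i
    · exact b2n1 (h ▸ a01)
    · exact b2n2 (h ▸ a12)
    · exact b2n1 (h ▸ a12.symm)
    · exact b2n2 (h ▸ a23.symm)
    · exact b2n1 (h ▸ a14.symm)
  have b1nb2 : b1 ≠ b2 := fun h => b2n1 (h ▸ b1v1)
  have b1nQ : b1 ∉ Q := fun h => hQv b1 h 1 b1v1
  have b2nQ : b2 ∉ Q := fun h => hQv b2 h 0 b2v0
  -- b1 and b2 are nonadjacent, else banner v1 v0 b2 b1 v4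
  have hbb : ¬ G.Adj b1 b2 := by
    intro hb
    exact banner_contra hban (v 1) (v 0) b2 b1 (v 4)
      a01.symm b2v0.symm hb.symm b1v1 a14
      (fun h => b2n1 h.symm) (fun h => b1n0 h.symm) n04
      b2n4 b1n4
      (Ne.symm (b2nv 1)) (Ne.symm (b1nv 0)) (fun h => absurd (hvinj h) (by decide))
      (b2nv 4) (b1nv 4)
  -- no common neighbor in Q, else C5  b1 z b2 v0 v1
  have noCommon : ∀ z ∈ Q, G.Adj b1 z → G.Adj b2 z → False := by
    intro z hz h1 h2
    exact cycle5_contra hc5 b1 z b2 (v 0) (v 1)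
      h1 h2.symm b2v0 a01 b1v1.symm
      hbb b1n0 (hQv z hz 0) (hQv z hz 1) (fun h => b2n1 h)
      b1nb2 (b1nv 0) (fun h => hQnv 0 (h ▸ hz)) (fun h => hQnv 1 (h ▸ hz)) (b2nv 1)
  -- shortest connection through Q
  have hex : ∃ n, ∃ (x y : Q) (w : (G.induce Q).Walk x y),
      w.length = n ∧ G.Adj b1 ↑x ∧ G.Adj b2 ↑y := by
    obtain ⟨w⟩ := hQconn.preconnected ⟨q1', hq1'Q⟩ ⟨q2', hq2'Q⟩
    exact ⟨w.length, _, _, w, rfl, hb1q, hb2q⟩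
  obtain ⟨x, y, w, hlen, hx, hy⟩ := Nat.find_spec hex
  have hmin : ∀ m, m < Nat.find hex → ¬ ∃ (x y : Q) (w : (G.induce Q).Walk x y),
      w.length = m ∧ G.Adj b1 ↑x ∧ G.Adj b2 ↑y := fun m hm => Nat.find_min hex hm
  cases w with
  | nil => exact noCommon ↑x x.2 hx hy
  | @cons _ m _ h w' =>
    have hG : G.Adj ↑x ↑m := h
    cases w' with
    | nil =>
      -- P6 : v4 v2 b1 x y b2
      have nb1y : ¬ G.Adj b1 ↑y := fun hc => noCommon ↑y y.2 hc hy
      have nb2x : ¬ G.Adj b2 ↑x := fun hc => noCommon ↑x x.2 hx hc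
      exact p6_contra hp6 (v 4) (v 2) b1 ↑x ↑y b2
        a24.symm b1v2.symm hx hG hy.symm
        (fun hc => b1n4 hc.symm) (fun hc => hQv ↑x x.2 4 hc.symm) (fun hc => hQv ↑y y.2 4 hc.symm)
        (fun hc => b2n4 hc.symm) (fun hc => hQv ↑x x.2 2 hc.symm) (fun hc => hQv ↑y y.2 2 hc.symm)
        (fun hc => b2n2 hc.symm) nb1y hbb (fun hc => nb2x hc.symm)
        (Ne.symm (b1nv 4)) (fun hc => hQnv 4 (hc ▸ x.2)) (fun hc => hQnv 4 (hc ▸ y.2))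
        (Ne.symm (b2nv 4)) (fun hc => hQnv 2 (hc ▸ x.2)) (fun hc => hQnv 2 (hc ▸ y.2))
        (Ne.symm (b2nv 2)) (fun hc => b1nQ (hc ▸ y.2)) b1nb2 (fun hc => b2nQ (hc ▸ x.2))
    | @cons _ m2 _ h2 w'' =>
      have hG2 : G.Adj ↑m ↑m2 := h2
      have hlen' : w''.length + 2 = Nat.find hex := by simpa using hlen
      have nb1m : ¬ G.Adj b1 ↑m := fun hc =>
        hmin (w''.length + 1) (by omega) ⟨m, y, Walk.cons h2 w'', by simp, hc, hy⟩
      have nb1m2 : ¬ G.Adj b1 ↑m2 := fun hc =>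
        hmin w''.length (by omega) ⟨m2, y, w'', rfl, hc, hy⟩
      have hxm2ne : x ≠ m2 := fun hc =>
        hmin w''.length (by omega) ⟨m2, y, w'', rfl, hc ▸ hx, hy⟩
      have hxm2 : ¬ G.Adj ↑x ↑m2 := fun hc =>
        hmin (w''.length + 1) (by omega) ⟨x, y, Walk.cons (show (G.induce Q).Adj x m2 from hc) w'', by simp, hx, hy⟩
      exact p6_contra hp6 (v 4) (v 2) b1 ↑x ↑m ↑m2
        a24.symm b1v2.symm hx hG hG2
        (fun hc => b1n4 hc.symm) (fun hc => hQv ↑x x.2 4 hc.symm) (fun hc => hQv ↑m m.2 4 hc.symm)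
        (fun hc => hQv ↑m2 m2.2 4 hc.symm) (fun hc => hQv ↑x x.2 2 hc.symm) (fun hc => hQv ↑m m.2 2 hc.symm)
        (fun hc => hQv ↑m2 m2.2 2 hc.symm) nb1m nb1m2 hxm2
        (Ne.symm (b1nv 4)) (fun hc => hQnv 4 (hc ▸ x.2)) (fun hc => hQnv 4 (hc ▸ m.2))
        (fun hc => hQnv 4 (hc ▸ m2.2)) (fun hc => hQnv 2 (hc ▸ x.2)) (fun hc => hQnv 2 (hc ▸ m.2))
        (fun hc => hQnv 2 (hc ▸ m2.2)) (fun hc => b1nQ (hc ▸ m.2)) (fun hc => b1nQ (hc ▸ m2.2))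
        (fun hc => hxm2ne (Subtype.ext hc))
end

section
/- Let G be a (P6, banner, C5)-free graph, H an induced house with vertices v1,...,v5 (4-cycle v1v2v3v4, v5 adjacent to v2 and v3), and Q a connected vertex set disjoint from and anticomplete to H. If a vertex x has exactly three neighbors on H and a neighbor in Q, then N_H(x) = {v2, v3, v5}. -/
open SimpleGraph

lemma free_elim {W V : Type*} {F : SimpleGraph W} {G : SimpleGraph V} (hF : _root_.Free F G)
    (w : W → V) (hinj : Function.Injective w)
    (h : ∀ i j, G.Adj (w i) (w j) ↔ F.Adj i j) : False :=
  hF.elim ⟨⟨w, hinj⟩, h _ _⟩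

set_option maxHeartbeats 3200000 in
theorem stmt_6 {V : Type*} (G : SimpleGraph V)
    (hp6 : _root_.Free (SimpleGraph.pathGraph 6) G) (hban : _root_.Free banner G)
    (hc5 : _root_.Free cycle5 G)
    (v : Fin 5 → V) (hH : IsInducedHouse G v)
    (Q : Set V) (hQconn : (G.induce Q).Connected) (hQ : Anticomplete5 G Q v)
    (x : V) (h3 : ({j | G.Adj x (v j)} : Set (Fin 5)).ncard = 3)
    (hxQ : ∃ q ∈ Q, G.Adj x q) :
    {j | G.Adj x (v j)} = ({1, 2, 4} : Set (Fin 5)) := by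
  classical
  obtain ⟨q, hqQ, hxq⟩ := hxQ
  have hqv : ∀ i, ¬ G.Adj q (v i) := fun i => hQ.2 q hqQ i
  have hvq : ∀ i, ¬ G.Adj (v i) q := fun i h => hqv i h.symm
  have hxv : ∀ i, x ≠ v i := fun i h => hqv i (h ▸ hxq).symm
  have hvx : ∀ i, v i ≠ x := fun i h => hxv i h.symm
  have hqvne : ∀ i, q ≠ v i := fun i h => hQ.1 i (h ▸ hqQ)
  have hvqne : ∀ i, v i ≠ q := fun i h => hqvne i h.symm
  have hxqne : x ≠ q := hxq.ne
  have hqxne : q ≠ x := hxq.ne'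
  have hvv : ∀ i j : Fin 5, i ≠ j → v i ≠ v j := fun i j h e => h (hH.1 e)
  have hAdj := hH.2
  have hqx : G.Adj q x := hxq.symm
  by_cases a0 : G.Adj x (v 0) <;> by_cases a1 : G.Adj x (v 1) <;>
    by_cases a2 : G.Adj x (v 2) <;> by_cases a3 : G.Adj x (v 3) <;>
    by_cases a4 : G.Adj x (v 4)
  · exfalso
    have hSeq : {j | G.Adj x (v j)} = ({0, 1, 2, 3, 4} : Set (Fin 5)) := by
      ext j; fin_cases j <;> simp [a0, a1, a2, a3, a4]
    have hne : ({0, 1, 2, 3, 4} : Set (Fin 5)).ncard ≠ 3 := by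
      rw [show ({0, 1, 2, 3, 4} : Set (Fin 5)) = (({0, 1, 2, 3, 4} : Finset (Fin 5)) : Set (Fin 5)) by simp,
        Set.ncard_coe_finset]
      decide
    exact hne (hSeq ▸ h3)
  · exfalso
    have hSeq : {j | G.Adj x (v j)} = ({0, 1, 2, 3} : Set (Fin 5)) := by
      ext j; fin_cases j <;> simp [a0, a1, a2, a3, a4]
    have hne : ({0, 1, 2, 3} : Set (Fin 5)).ncard ≠ 3 := by
      rw [show ({0, 1, 2, 3} : Set (Fin 5)) = (({0, 1, 2, 3} : Finset (Fin 5)) : Set (Fin 5)) by simp,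
        Set.ncard_coe_finset]
      decide
    exact hne (hSeq ▸ h3)
  · exfalso
    have hSeq : {j | G.Adj x (v j)} = ({0, 1, 2, 4} : Set (Fin 5)) := by
      ext j; fin_cases j <;> simp [a0, a1, a2, a3, a4]
    have hne : ({0, 1, 2, 4} : Set (Fin 5)).ncard ≠ 3 := by
      rw [show ({0, 1, 2, 4} : Set (Fin 5)) = (({0, 1, 2, 4} : Finset (Fin 5)) : Set (Fin 5)) by simp,
        Set.ncard_coe_finset]
      decide
    exact hne (hSeq ▸ h3)
  · exfalso
    have s0 : G.Adj (v 0) x := a0.symm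
    have s1 : G.Adj (v 1) x := a1.symm
    have s2 : G.Adj (v 2) x := a2.symm
    have s3 : ¬ G.Adj (v 3) x := fun h => a3 h.symm
    have s4 : ¬ G.Adj (v 4) x := fun h => a4 h.symm
    refine free_elim hban ![x, v 2, v 3, v 0, q] ?_ ?_
    · intro i j hij
      fin_cases i <;> fin_cases j <;> simp_all
    · intro i j
      fin_cases i <;> fin_cases j <;>
        simp [banner, hAdj, a0, a1, a2, a3, a4, s0, s1, s2, s3, s4, hqv, hvq, hxq, hqx]
  · exfalso
    have hSeq : {j | G.Adj x (v j)} = ({0, 1, 3, 4} : Set (Fin 5)) := by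
      ext j; fin_cases j <;> simp [a0, a1, a2, a3, a4]
    have hne : ({0, 1, 3, 4} : Set (Fin 5)).ncard ≠ 3 := by
      rw [show ({0, 1, 3, 4} : Set (Fin 5)) = (({0, 1, 3, 4} : Finset (Fin 5)) : Set (Fin 5)) by simp,
        Set.ncard_coe_finset]
      decide
    exact hne (hSeq ▸ h3)
  · exfalso
    have s0 : G.Adj (v 0) x := a0.symm
    have s1 : G.Adj (v 1) x := a1.symm
    have s2 : ¬ G.Adj (v 2) x := fun h => a2 h.symm
    have s3 : G.Adj (v 3) x := a3.symm
    have s4 : ¬ G.Adj (v 4) x := fun h => a4 h.symm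
    refine free_elim hban ![x, v 1, v 2, v 3, q] ?_ ?_
    · intro i j hij
      fin_cases i <;> fin_cases j <;> simp_all
    · intro i j
      fin_cases i <;> fin_cases j <;>
        simp [banner, hAdj, a0, a1, a2, a3, a4, s0, s1, s2, s3, s4, hqv, hvq, hxq, hqx]
  · exfalso
    have s0 : G.Adj (v 0) x := a0.symm
    have s1 : G.Adj (v 1) x := a1.symm
    have s2 : ¬ G.Adj (v 2) x := fun h => a2 h.symm
    have s3 : ¬ G.Adj (v 3) x := fun h => a3 h.symm
    have s4 : G.Adj (v 4) x := a4.symm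
    refine free_elim hc5 ![x, v 0, v 3, v 2, v 4] ?_ ?_
    · intro i j hij
      fin_cases i <;> fin_cases j <;> simp_all
    · intro i j
      fin_cases i <;> fin_cases j <;>
        simp [cycle5, hAdj, a0, a1, a2, a3, a4, s0, s1, s2, s3, s4, hqv, hvq, hxq, hqx]
  · exfalso
    have hSeq : {j | G.Adj x (v j)} = ({0, 1} : Set (Fin 5)) := by
      ext j; fin_cases j <;> simp [a0, a1, a2, a3, a4]
    have hne : ({0, 1} : Set (Fin 5)).ncard ≠ 3 := by
      rw [show ({0, 1} : Set (Fin 5)) = (({0, 1} : Finset (Fin 5)) : Set (Fin 5)) by simp,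
        Set.ncard_coe_finset]
      decide
    exact hne (hSeq ▸ h3)
  · exfalso
    have hSeq : {j | G.Adj x (v j)} = ({0, 2, 3, 4} : Set (Fin 5)) := by
      ext j; fin_cases j <;> simp [a0, a1, a2, a3, a4]
    have hne : ({0, 2, 3, 4} : Set (Fin 5)).ncard ≠ 3 := by
      rw [show ({0, 2, 3, 4} : Set (Fin 5)) = (({0, 2, 3, 4} : Finset (Fin 5)) : Set (Fin 5)) by simp,
        Set.ncard_coe_finset]
      decide
    exact hne (hSeq ▸ h3)
  · exfalso
    have s0 : G.Adj (v 0) x := a0.symm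
    have s1 : ¬ G.Adj (v 1) x := fun h => a1 h.symm
    have s2 : G.Adj (v 2) x := a2.symm
    have s3 : G.Adj (v 3) x := a3.symm
    have s4 : ¬ G.Adj (v 4) x := fun h => a4 h.symm
    refine free_elim hban ![x, v 0, v 1, v 2, q] ?_ ?_
    · intro i j hij
      fin_cases i <;> fin_cases j <;> simp_all
    · intro i j
      fin_cases i <;> fin_cases j <;>
        simp [banner, hAdj, a0, a1, a2, a3, a4, s0, s1, s2, s3, s4, hqv, hvq, hxq, hqx]
  · exfalso
    have s0 : G.Adj (v 0) x := a0.symm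
    have s1 : ¬ G.Adj (v 1) x := fun h => a1 h.symm
    have s2 : G.Adj (v 2) x := a2.symm
    have s3 : ¬ G.Adj (v 3) x := fun h => a3 h.symm
    have s4 : G.Adj (v 4) x := a4.symm
    refine free_elim hban ![x, v 0, v 1, v 2, q] ?_ ?_
    · intro i j hij
      fin_cases i <;> fin_cases j <;> simp_all
    · intro i j
      fin_cases i <;> fin_cases j <;>
        simp [banner, hAdj, a0, a1, a2, a3, a4, s0, s1, s2, s3, s4, hqv, hvq, hxq, hqx]
  · exfalso
    have hSeq : {j | G.Adj x (v j)} = ({0, 2} : Set (Fin 5)) := by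
      ext j; fin_cases j <;> simp [a0, a1, a2, a3, a4]
    have hne : ({0, 2} : Set (Fin 5)).ncard ≠ 3 := by
      rw [show ({0, 2} : Set (Fin 5)) = (({0, 2} : Finset (Fin 5)) : Set (Fin 5)) by simp,
        Set.ncard_coe_finset]
      decide
    exact hne (hSeq ▸ h3)
  · exfalso
    have s0 : G.Adj (v 0) x := a0.symm
    have s1 : ¬ G.Adj (v 1) x := fun h => a1 h.symm
    have s2 : ¬ G.Adj (v 2) x := fun h => a2 h.symm
    have s3 : G.Adj (v 3) x := a3.symm
    have s4 : G.Adj (v 4) x := a4.symm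
    refine free_elim hban ![x, v 0, v 1, v 4, q] ?_ ?_
    · intro i j hij
      fin_cases i <;> fin_cases j <;> simp_all
    · intro i j
      fin_cases i <;> fin_cases j <;>
        simp [banner, hAdj, a0, a1, a2, a3, a4, s0, s1, s2, s3, s4, hqv, hvq, hxq, hqx]
  · exfalso
    have hSeq : {j | G.Adj x (v j)} = ({0, 3} : Set (Fin 5)) := by
      ext j; fin_cases j <;> simp [a0, a1, a2, a3, a4]
    have hne : ({0, 3} : Set (Fin 5)).ncard ≠ 3 := by
      rw [show ({0, 3} : Set (Fin 5)) = (({0, 3} : Finset (Fin 5)) : Set (Fin 5)) by simp,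
        Set.ncard_coe_finset]
      decide
    exact hne (hSeq ▸ h3)
  · exfalso
    have hSeq : {j | G.Adj x (v j)} = ({0, 4} : Set (Fin 5)) := by
      ext j; fin_cases j <;> simp [a0, a1, a2, a3, a4]
    have hne : ({0, 4} : Set (Fin 5)).ncard ≠ 3 := by
      rw [show ({0, 4} : Set (Fin 5)) = (({0, 4} : Finset (Fin 5)) : Set (Fin 5)) by simp,
        Set.ncard_coe_finset]
      decide
    exact hne (hSeq ▸ h3)
  · exfalso
    have hSeq : {j | G.Adj x (v j)} = ({0} : Set (Fin 5)) := by
      ext j; fin_cases j <;> simp [a0, a1, a2, a3, a4]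
    have hne : ({0} : Set (Fin 5)).ncard ≠ 3 := by
      rw [show ({0} : Set (Fin 5)) = (({0} : Finset (Fin 5)) : Set (Fin 5)) by simp,
        Set.ncard_coe_finset]
      decide
    exact hne (hSeq ▸ h3)
  · exfalso
    have hSeq : {j | G.Adj x (v j)} = ({1, 2, 3, 4} : Set (Fin 5)) := by
      ext j; fin_cases j <;> simp [a0, a1, a2, a3, a4]
    have hne : ({1, 2, 3, 4} : Set (Fin 5)).ncard ≠ 3 := by
      rw [show ({1, 2, 3, 4} : Set (Fin 5)) = (({1, 2, 3, 4} : Finset (Fin 5)) : Set (Fin 5)) by simp,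
        Set.ncard_coe_finset]
      decide
    exact hne (hSeq ▸ h3)
  · exfalso
    have s0 : ¬ G.Adj (v 0) x := fun h => a0 h.symm
    have s1 : G.Adj (v 1) x := a1.symm
    have s2 : G.Adj (v 2) x := a2.symm
    have s3 : G.Adj (v 3) x := a3.symm
    have s4 : ¬ G.Adj (v 4) x := fun h => a4 h.symm
    refine free_elim hban ![x, v 1, v 0, v 3, q] ?_ ?_
    · intro i j hij
      fin_cases i <;> fin_cases j <;> simp_all
    · intro i j
      fin_cases i <;> fin_cases j <;>
        simp [banner, hAdj, a0, a1, a2, a3, a4, s0, s1, s2, s3, s4, hqv, hvq, hxq, hqx]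
  · ext j; fin_cases j <;> simp [a0, a1, a2, a3, a4]
  · exfalso
    have hSeq : {j | G.Adj x (v j)} = ({1, 2} : Set (Fin 5)) := by
      ext j; fin_cases j <;> simp [a0, a1, a2, a3, a4]
    have hne : ({1, 2} : Set (Fin 5)).ncard ≠ 3 := by
      rw [show ({1, 2} : Set (Fin 5)) = (({1, 2} : Finset (Fin 5)) : Set (Fin 5)) by simp,
        Set.ncard_coe_finset]
      decide
    exact hne (hSeq ▸ h3)
  · exfalso
    have s0 : ¬ G.Adj (v 0) x := fun h => a0 h.symm
    have s1 : G.Adj (v 1) x := a1.symm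
    have s2 : ¬ G.Adj (v 2) x := fun h => a2 h.symm
    have s3 : G.Adj (v 3) x := a3.symm
    have s4 : G.Adj (v 4) x := a4.symm
    refine free_elim hban ![x, v 1, v 0, v 3, q] ?_ ?_
    · intro i j hij
      fin_cases i <;> fin_cases j <;> simp_all
    · intro i j
      fin_cases i <;> fin_cases j <;>
        simp [banner, hAdj, a0, a1, a2, a3, a4, s0, s1, s2, s3, s4, hqv, hvq, hxq, hqx]
  · exfalso
    have hSeq : {j | G.Adj x (v j)} = ({1, 3} : Set (Fin 5)) := by
      ext j; fin_cases j <;> simp [a0, a1, a2, a3, a4]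
    have hne : ({1, 3} : Set (Fin 5)).ncard ≠ 3 := by
      rw [show ({1, 3} : Set (Fin 5)) = (({1, 3} : Finset (Fin 5)) : Set (Fin 5)) by simp,
        Set.ncard_coe_finset]
      decide
    exact hne (hSeq ▸ h3)
  · exfalso
    have hSeq : {j | G.Adj x (v j)} = ({1, 4} : Set (Fin 5)) := by
      ext j; fin_cases j <;> simp [a0, a1, a2, a3, a4]
    have hne : ({1, 4} : Set (Fin 5)).ncard ≠ 3 := by
      rw [show ({1, 4} : Set (Fin 5)) = (({1, 4} : Finset (Fin 5)) : Set (Fin 5)) by simp,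
        Set.ncard_coe_finset]
      decide
    exact hne (hSeq ▸ h3)
  · exfalso
    have hSeq : {j | G.Adj x (v j)} = ({1} : Set (Fin 5)) := by
      ext j; fin_cases j <;> simp [a0, a1, a2, a3, a4]
    have hne : ({1} : Set (Fin 5)).ncard ≠ 3 := by
      rw [show ({1} : Set (Fin 5)) = (({1} : Finset (Fin 5)) : Set (Fin 5)) by simp,
        Set.ncard_coe_finset]
      decide
    exact hne (hSeq ▸ h3)
  · exfalso
    have s0 : ¬ G.Adj (v 0) x := fun h => a0 h.symm
    have s1 : ¬ G.Adj (v 1) x := fun h => a1 h.symm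
    have s2 : G.Adj (v 2) x := a2.symm
    have s3 : G.Adj (v 3) x := a3.symm
    have s4 : G.Adj (v 4) x := a4.symm
    refine free_elim hc5 ![x, v 3, v 0, v 1, v 4] ?_ ?_
    · intro i j hij
      fin_cases i <;> fin_cases j <;> simp_all
    · intro i j
      fin_cases i <;> fin_cases j <;>
        simp [cycle5, hAdj, a0, a1, a2, a3, a4, s0, s1, s2, s3, s4, hqv, hvq, hxq, hqx]
  · exfalso
    have hSeq : {j | G.Adj x (v j)} = ({2, 3} : Set (Fin 5)) := by
      ext j; fin_cases j <;> simp [a0, a1, a2, a3, a4]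
    have hne : ({2, 3} : Set (Fin 5)).ncard ≠ 3 := by
      rw [show ({2, 3} : Set (Fin 5)) = (({2, 3} : Finset (Fin 5)) : Set (Fin 5)) by simp,
        Set.ncard_coe_finset]
      decide
    exact hne (hSeq ▸ h3)
  · exfalso
    have hSeq : {j | G.Adj x (v j)} = ({2, 4} : Set (Fin 5)) := by
      ext j; fin_cases j <;> simp [a0, a1, a2, a3, a4]
    have hne : ({2, 4} : Set (Fin 5)).ncard ≠ 3 := by
      rw [show ({2, 4} : Set (Fin 5)) = (({2, 4} : Finset (Fin 5)) : Set (Fin 5)) by simp,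
        Set.ncard_coe_finset]
      decide
    exact hne (hSeq ▸ h3)
  · exfalso
    have hSeq : {j | G.Adj x (v j)} = ({2} : Set (Fin 5)) := by
      ext j; fin_cases j <;> simp [a0, a1, a2, a3, a4]
    have hne : ({2} : Set (Fin 5)).ncard ≠ 3 := by
      rw [show ({2} : Set (Fin 5)) = (({2} : Finset (Fin 5)) : Set (Fin 5)) by simp,
        Set.ncard_coe_finset]
      decide
    exact hne (hSeq ▸ h3)
  · exfalso
    have hSeq : {j | G.Adj x (v j)} = ({3, 4} : Set (Fin 5)) := by
      ext j; fin_cases j <;> simp [a0, a1, a2, a3, a4]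
    have hne : ({3, 4} : Set (Fin 5)).ncard ≠ 3 := by
      rw [show ({3, 4} : Set (Fin 5)) = (({3, 4} : Finset (Fin 5)) : Set (Fin 5)) by simp,
        Set.ncard_coe_finset]
      decide
    exact hne (hSeq ▸ h3)
  · exfalso
    have hSeq : {j | G.Adj x (v j)} = ({3} : Set (Fin 5)) := by
      ext j; fin_cases j <;> simp [a0, a1, a2, a3, a4]
    have hne : ({3} : Set (Fin 5)).ncard ≠ 3 := by
      rw [show ({3} : Set (Fin 5)) = (({3} : Finset (Fin 5)) : Set (Fin 5)) by simp,
        Set.ncard_coe_finset]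
      decide
    exact hne (hSeq ▸ h3)
  · exfalso
    have hSeq : {j | G.Adj x (v j)} = ({4} : Set (Fin 5)) := by
      ext j; fin_cases j <;> simp [a0, a1, a2, a3, a4]
    have hne : ({4} : Set (Fin 5)).ncard ≠ 3 := by
      rw [show ({4} : Set (Fin 5)) = (({4} : Finset (Fin 5)) : Set (Fin 5)) by simp,
        Set.ncard_coe_finset]
      decide
    exact hne (hSeq ▸ h3)
  · exfalso
    have hSeq : {j | G.Adj x (v j)} = (∅ : Set (Fin 5)) := by
      ext j; fin_cases j <;> simp [a0, a1, a2, a3, a4]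
    have hne : (∅ : Set (Fin 5)).ncard ≠ 3 := by
      rw [show (∅ : Set (Fin 5)) = ((∅ : Finset (Fin 5)) : Set (Fin 5)) by simp,
        Set.ncard_coe_finset]
      decide
    exact hne (hSeq ▸ h3)
end

section
/- Let G be a (P6, banner, C5)-free graph, H an induced house with vertices v1,...,v5 (4-cycle v1v2v3v4, v5 adjacent to v2 and v3), and Q a connected vertex set disjoint from and anticomplete to H. If a vertex x has exactly four neighbors on H and a neighbor in Q, then N_H(x) = {v1, v2, v3, v4}. -/
open SimpleGraph

private def banner_emb {V : Type*} (G : SimpleGraph V) (f : Fin 5 → V)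
    (hinj : Function.Injective f)
    (h : ∀ i j, banner.Adj i j ↔ G.Adj (f i) (f j)) : banner ↪g G :=
  ⟨⟨f, hinj⟩, fun {a b} => (h a b).symm⟩

theorem stmt_7 {V : Type*} (G : SimpleGraph V)
    (hp6 : _root_.Free (SimpleGraph.pathGraph 6) G) (hban : _root_.Free banner G)
    (hc5 : _root_.Free cycle5 G)
    (v : Fin 5 → V) (hH : IsInducedHouse G v)
    (Q : Set V) (hQconn : (G.induce Q).Connected) (hQ : Anticomplete5 G Q v)
    (x : V) (h4 : ({j | G.Adj x (v j)} : Set (Fin 5)).ncard = 4)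
    (hxQ : ∃ q ∈ Q, G.Adj x q) :
    {j | G.Adj x (v j)} = ({0, 1, 2, 3} : Set (Fin 5)) := by

  classical
  obtain ⟨q, hqQ, hxq⟩ := hxQ
  obtain ⟨hvinj, hadj⟩ := hH
  set S : Set (Fin 5) := {j | G.Adj x (v j)} with hSdef
  have hqv : ∀ i, ¬ G.Adj q (v i) := hQ.2 q hqQ
  have hqvne : ∀ i, q ≠ v i := fun i h => hQ.1 i (h ▸ hqQ)
  have hqx : q ≠ x := fun h => G.loopless.irrefl x (h ▸ hxq)
  have hxv : ∀ i, x ≠ v i := fun i h => hqv i ((h ▸ hxq).symm)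
  have hnotall : ∃ k, k ∉ S := by
    by_contra h
    push_neg at h
    have : S = Set.univ := Set.eq_univ_of_forall h
    rw [this, Set.ncard_univ] at h4
    simp at h4
  obtain ⟨k, hk⟩ := hnotall
  have hSsub : S ⊆ {k}ᶜ := fun j hj => by
    simp only [Set.mem_compl_iff, Set.mem_singleton_iff]
    rintro rfl; exact hk hj
  have hcompl : ({k}ᶜ : Set (Fin 5)).ncard = 4 := by
    have h := Set.ncard_add_ncard_compl ({k} : Set (Fin 5))
    simp [Set.ncard_singleton, Nat.card_eq_fintype_card] at h
    omega
  have hSeq : S = {k}ᶜ :=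
    Set.eq_of_subset_of_ncard_le hSsub (by rw [hcompl, h4]) (Set.toFinite _)
  have hmem : ∀ j, j ≠ k → G.Adj x (v j) := by
    intro j hj
    have : j ∈ S := by rw [hSeq]; simpa using hj
    exact this
  have hnmem : ¬ G.Adj x (v k) := hk
  have hA : ∀ i j : Fin 5,
      ((i, j) ∈ [((0 : Fin 5), 1), (1, 2), (2, 3), (3, 0), (1, 4), (2, 4)] ∨
       (j, i) ∈ [((0 : Fin 5), 1), (1, 2), (2, 3), (3, 0), (1, 4), (2, 4)]) →
      G.Adj (v i) (v j) := fun i j h => (hadj i j).mpr h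
  have hN : ∀ i j : Fin 5,
      ¬((i, j) ∈ [((0 : Fin 5), 1), (1, 2), (2, 3), (3, 0), (1, 4), (2, 4)] ∨
       (j, i) ∈ [((0 : Fin 5), 1), (1, 2), (2, 3), (3, 0), (1, 4), (2, 4)]) →
      ¬ G.Adj (v i) (v j) := fun i j h ha => h ((hadj i j).mp ha)
  fin_cases k
  · -- k = 0
    exact (hban.false (banner_emb G ![x, v 1, v 0, v 3, q]
      (by
        intro a b hab
        fin_cases a <;> fin_cases b <;>
          first
          | rfl
          | (exfalso
             simp only [Fin.isValue, Fin.zero_eta, Fin.mk_one, Fin.reduceFinMk,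
               Matrix.cons_val_zero, Matrix.cons_val_one, Matrix.head_cons,
               Matrix.cons_val_two, Matrix.tail_cons, Matrix.cons_val_three,
               Matrix.cons_val_four] at hab
             first
             | exact hxv _ hab
             | exact hxv _ hab.symm
             | exact hqvne _ hab
             | exact hqvne _ hab.symm
             | exact hqx hab
             | exact hqx hab.symm
             | exact absurd (hvinj hab) (by decide)
             | exact absurd (hvinj hab.symm) (by decide)))
      (by
        intro i j
        fin_cases i <;> fin_cases j <;>
          simp only [banner, SimpleGraph.fromRel_adj, List.mem_cons, Fin.isValue,
            Fin.zero_eta, Fin.mk_one, Fin.reduceFinMk, Matrix.cons_val_zero,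
            Matrix.cons_val_one, Matrix.head_cons, Matrix.cons_val_two,
            Matrix.tail_cons, Matrix.cons_val_three, Matrix.cons_val_four] <;>
          constructor <;> intro h <;>
          first
          | (exfalso; revert h; decide)
          | (exfalso; exact G.loopless.irrefl _ h)
          | (exact ⟨by decide, by decide⟩)
          | exact hmem _ (by decide)
          | exact (hmem _ (by decide)).symm
          | exact hxq
          | exact hxq.symm
          | exact hA _ _ (by decide)
          | (exfalso; exact hnmem h)
          | (exfalso; exact hnmem h.symm)
          | (exfalso; exact hN _ _ (by decide) h)
          | (exfalso; exact hqv _ h)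
          | (exfalso; exact hqv _ h.symm)))).elim
  · -- k = 1
    exact (hban.false (banner_emb G ![x, v 0, v 1, v 2, q]
      (by
        intro a b hab
        fin_cases a <;> fin_cases b <;>
          first
          | rfl
          | (exfalso
             simp only [Fin.isValue, Fin.zero_eta, Fin.mk_one, Fin.reduceFinMk,
               Matrix.cons_val_zero, Matrix.cons_val_one, Matrix.head_cons,
               Matrix.cons_val_two, Matrix.tail_cons, Matrix.cons_val_three,
               Matrix.cons_val_four] at hab
             first
             | exact hxv _ hab
             | exact hxv _ hab.symm
             | exact hqvne _ hab
             | exact hqvne _ hab.symm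
             | exact hqx hab
             | exact hqx hab.symm
             | exact absurd (hvinj hab) (by decide)
             | exact absurd (hvinj hab.symm) (by decide)))
      (by
        intro i j
        fin_cases i <;> fin_cases j <;>
          simp only [banner, SimpleGraph.fromRel_adj, List.mem_cons, Fin.isValue,
            Fin.zero_eta, Fin.mk_one, Fin.reduceFinMk, Matrix.cons_val_zero,
            Matrix.cons_val_one, Matrix.head_cons, Matrix.cons_val_two,
            Matrix.tail_cons, Matrix.cons_val_three, Matrix.cons_val_four] <;>
          constructor <;> intro h <;>
          first
          | (exfalso; revert h; decide)
          | (exfalso; exact G.loopless.irrefl _ h)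
          | (exact ⟨by decide, by decide⟩)
          | exact hmem _ (by decide)
          | exact (hmem _ (by decide)).symm
          | exact hxq
          | exact hxq.symm
          | exact hA _ _ (by decide)
          | (exfalso; exact hnmem h)
          | (exfalso; exact hnmem h.symm)
          | (exfalso; exact hN _ _ (by decide) h)
          | (exfalso; exact hqv _ h)
          | (exfalso; exact hqv _ h.symm)))).elim
  · -- k = 2
    exact (hban.false (banner_emb G ![x, v 1, v 2, v 3, q]
      (by
        intro a b hab
        fin_cases a <;> fin_cases b <;>
          first
          | rfl
          | (exfalso
             simp only [Fin.isValue, Fin.zero_eta, Fin.mk_one, Fin.reduceFinMk,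
               Matrix.cons_val_zero, Matrix.cons_val_one, Matrix.head_cons,
               Matrix.cons_val_two, Matrix.tail_cons, Matrix.cons_val_three,
               Matrix.cons_val_four] at hab
             first
             | exact hxv _ hab
             | exact hxv _ hab.symm
             | exact hqvne _ hab
             | exact hqvne _ hab.symm
             | exact hqx hab
             | exact hqx hab.symm
             | exact absurd (hvinj hab) (by decide)
             | exact absurd (hvinj hab.symm) (by decide)))
      (by
        intro i j
        fin_cases i <;> fin_cases j <;>
          simp only [banner, SimpleGraph.fromRel_adj, List.mem_cons, Fin.isValue,
            Fin.zero_eta, Fin.mk_one, Fin.reduceFinMk, Matrix.cons_val_zero,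
            Matrix.cons_val_one, Matrix.head_cons, Matrix.cons_val_two,
            Matrix.tail_cons, Matrix.cons_val_three, Matrix.cons_val_four] <;>
          constructor <;> intro h <;>
          first
          | (exfalso; revert h; decide)
          | (exfalso; exact G.loopless.irrefl _ h)
          | (exact ⟨by decide, by decide⟩)
          | exact hmem _ (by decide)
          | exact (hmem _ (by decide)).symm
          | exact hxq
          | exact hxq.symm
          | exact hA _ _ (by decide)
          | (exfalso; exact hnmem h)
          | (exfalso; exact hnmem h.symm)
          | (exfalso; exact hN _ _ (by decide) h)
          | (exfalso; exact hqv _ h)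
          | (exfalso; exact hqv _ h.symm)))).elim
  · -- k = 3
    exact (hban.false (banner_emb G ![x, v 0, v 3, v 2, q]
      (by
        intro a b hab
        fin_cases a <;> fin_cases b <;>
          first
          | rfl
          | (exfalso
             simp only [Fin.isValue, Fin.zero_eta, Fin.mk_one, Fin.reduceFinMk,
               Matrix.cons_val_zero, Matrix.cons_val_one, Matrix.head_cons,
               Matrix.cons_val_two, Matrix.tail_cons, Matrix.cons_val_three,
               Matrix.cons_val_four] at hab
             first
             | exact hxv _ hab
             | exact hxv _ hab.symm
             | exact hqvne _ hab
             | exact hqvne _ hab.symm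
             | exact hqx hab
             | exact hqx hab.symm
             | exact absurd (hvinj hab) (by decide)
             | exact absurd (hvinj hab.symm) (by decide)))
      (by
        intro i j
        fin_cases i <;> fin_cases j <;>
          simp only [banner, SimpleGraph.fromRel_adj, List.mem_cons, Fin.isValue,
            Fin.zero_eta, Fin.mk_one, Fin.reduceFinMk, Matrix.cons_val_zero,
            Matrix.cons_val_one, Matrix.head_cons, Matrix.cons_val_two,
            Matrix.tail_cons, Matrix.cons_val_three, Matrix.cons_val_four] <;>
          constructor <;> intro h <;>
          first
          | (exfalso; revert h; decide)
          | (exfalso; exact G.loopless.irrefl _ h)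
          | (exact ⟨by decide, by decide⟩)
          | exact hmem _ (by decide)
          | exact (hmem _ (by decide)).symm
          | exact hxq
          | exact hxq.symm
          | exact hA _ _ (by decide)
          | (exfalso; exact hnmem h)
          | (exfalso; exact hnmem h.symm)
          | (exfalso; exact hN _ _ (by decide) h)
          | (exfalso; exact hqv _ h)
          | (exfalso; exact hqv _ h.symm)))).elim
  · -- k = 4
    rw [hSeq]; ext j; fin_cases j <;> simp
end

section
/- Let G be a (P6, banner)-free graph, H an induced 5-cycle with vertices v1,...,v5 (indices mod 5), and Q a connected vertex set disjoint from and anticomplete to H. Then the set A3+ of vertices with exactly three neighbors on H and at least one neighbor in Q is a clique. -/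
open SimpleGraph

lemma no_banner' {V : Type*} {G : SimpleGraph V} (hban : _root_.Free banner G) (a b c d e : V)
    (hab : G.Adj a b) (hbc : G.Adj b c) (hcd : G.Adj c d) (hda : G.Adj d a) (hae : G.Adj a e)
    (hac : ¬ G.Adj a c) (hbd : ¬ G.Adj b d) (hbe : ¬ G.Adj b e) (hce : ¬ G.Adj c e)
    (hde : ¬ G.Adj d e)
    (nac : a ≠ c) (nbd : b ≠ d) (nbe : b ≠ e) (nce : c ≠ e) (nde : d ≠ e) : False := by
  apply hban.false
  refine ⟨⟨![a,b,c,d,e], ?_⟩, ?_⟩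
  · intro i j h
    fin_cases i <;> fin_cases j <;> simp_all
  · intro i j
    fin_cases i <;> fin_cases j <;>
      simp only [Function.Embedding.coeFn_mk, Matrix.cons_val_zero, Matrix.cons_val_one,
        Matrix.head_cons, Matrix.cons_val_two, Matrix.tail_cons, Matrix.cons_val_three,
        Matrix.cons_val_four, Matrix.head_fin_const, Matrix.cons_val_fin_one] <;>
      constructor <;> intro h <;>
      first
      | exact absurd h G.irrefl
      | assumption
      | exact hab.symm | exact hbc.symm | exact hcd.symm | exact hda.symm | exact hae.symm
      | exact hda | exact hcd
      | exact absurd h (by rw [banner, SimpleGraph.fromRel_adj]; decide)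
      | exact absurd h hac | exact absurd h hbd | exact absurd h hbe
      | exact absurd h hce | exact absurd h hde
      | exact absurd h.symm hac | exact absurd h.symm hbd | exact absurd h.symm hbe
      | exact absurd h.symm hce | exact absurd h.symm hde
      | · rw [banner, SimpleGraph.fromRel_adj]; decide

set_option maxHeartbeats 3200000 in
lemma no_p6' {V : Type*} {G : SimpleGraph V} (hp6 : _root_.Free (SimpleGraph.pathGraph 6) G)
    (a b c d e f : V)
    (hab : G.Adj a b) (hbc : G.Adj b c) (hcd : G.Adj c d) (hde : G.Adj d e) (hef : G.Adj e f)
    (hac : ¬ G.Adj a c) (had : ¬ G.Adj a d) (hae : ¬ G.Adj a e) (haf : ¬ G.Adj a f)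
    (hbd : ¬ G.Adj b d) (hbe : ¬ G.Adj b e) (hbf : ¬ G.Adj b f)
    (hce : ¬ G.Adj c e) (hcf : ¬ G.Adj c f) (hdf : ¬ G.Adj d f)
    (nac : a ≠ c) (nad : a ≠ d) (nae : a ≠ e) (naf : a ≠ f)
    (nbd : b ≠ d) (nbe : b ≠ e) (nbf : b ≠ f)
    (nce : c ≠ e) (ncf : c ≠ f) (ndf : d ≠ f) : False := by
  apply hp6.false
  refine ⟨⟨![a,b,c,d,e,f], ?_⟩, ?_⟩
  · intro i j h
    fin_cases i <;> fin_cases j <;>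
      first
      | rfl
      | exact absurd h (G.ne_of_adj hab) | exact absurd h (G.ne_of_adj hbc)
      | exact absurd h (G.ne_of_adj hcd) | exact absurd h (G.ne_of_adj hde)
      | exact absurd h (G.ne_of_adj hef)
      | exact absurd h (G.ne_of_adj hab.symm) | exact absurd h (G.ne_of_adj hbc.symm)
      | exact absurd h (G.ne_of_adj hcd.symm) | exact absurd h (G.ne_of_adj hde.symm)
      | exact absurd h (G.ne_of_adj hef.symm)
      | exact absurd h nac | exact absurd h nad | exact absurd h nae | exact absurd h naf
      | exact absurd h nbd | exact absurd h nbe | exact absurd h nbf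
      | exact absurd h nce | exact absurd h ncf | exact absurd h ndf
      | exact absurd h nac.symm | exact absurd h nad.symm | exact absurd h nae.symm
      | exact absurd h naf.symm | exact absurd h nbd.symm | exact absurd h nbe.symm
      | exact absurd h nbf.symm | exact absurd h nce.symm | exact absurd h ncf.symm
      | exact absurd h ndf.symm
  · intro i j
    fin_cases i <;> fin_cases j <;> constructor <;> intro h <;>
      first
      | exact absurd h G.irrefl
      | assumption
      | exact hab.symm | exact hbc.symm | exact hcd.symm | exact hde.symm | exact hef.symm
      | exact absurd h (by rw [SimpleGraph.pathGraph_adj]; decide)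
      | exact absurd h hac | exact absurd h had | exact absurd h hae | exact absurd h haf
      | exact absurd h hbd | exact absurd h hbe | exact absurd h hbf
      | exact absurd h hce | exact absurd h hcf | exact absurd h hdf
      | exact absurd h.symm hac | exact absurd h.symm had | exact absurd h.symm hae
      | exact absurd h.symm haf | exact absurd h.symm hbd | exact absurd h.symm hbe
      | exact absurd h.symm hbf | exact absurd h.symm hce | exact absurd h.symm hcf
      | exact absurd h.symm hdf
      | · rw [SimpleGraph.pathGraph_adj]; decide

section Aux
variable {V : Type*} {G : SimpleGraph V} {v : Fin 5 → V}

lemma c5_adj (hC5 : IsInducedC5 G v) (i j : Fin 5) (h : j = i + 1 ∨ i = j + 1) :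
    G.Adj (v i) (v j) := (hC5.2 i j).mpr h

lemma c5_non (hC5 : IsInducedC5 G v) (i j : Fin 5) (h : ¬(j = i + 1 ∨ i = j + 1)) :
    ¬ G.Adj (v i) (v j) := fun hh => h ((hC5.2 i j).mp hh)

lemma c5_ne (hC5 : IsInducedC5 G v) (i j : Fin 5) (h : i ≠ j) : v i ≠ v j :=
  fun hh => h (hC5.1 hh)

lemma qne (hC5 : IsInducedC5 G v) {q : V} (hqv : ∀ t, ¬ G.Adj q (v t)) (j : Fin 5) :
    q ≠ v j := fun h => hqv (j + 1) (by rw [h]; exact c5_adj hC5 j (j+1) (Or.inl rfl))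

lemma rotC5 (hC5 : IsInducedC5 G v) (k : Fin 5) : IsInducedC5 G (fun t => v (t + k)) := by
  constructor
  · intro i j hij
    exact add_right_cancel (hC5.1 hij)
  · intro i j
    rw [hC5.2 (i + k) (j + k)]
    constructor
    · rintro (hh | hh)
      · exact Or.inl (add_right_cancel (hh.trans (by abel) : j + k = (i + 1) + k))
      · exact Or.inr (add_right_cancel (hh.trans (by abel) : i + k = (j + 1) + k))
    · rintro (hh | hh)
      · exact Or.inl (by rw [hh]; abel)
      · exact Or.inr (by rw [hh]; abel)

lemma bad0 (hban : _root_.Free banner G) (hC5 : IsInducedC5 G v) {x : V}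
    (h0 : G.Adj x (v 0)) (h1 : G.Adj x (v 1)) (h3 : G.Adj x (v 3))
    (n2 : ¬G.Adj x (v 2)) (n4 : ¬G.Adj x (v 4)) : False :=
  no_banner' hban (v 3) x (v 0) (v 4) (v 2)
    h3.symm h0 (c5_adj hC5 0 4 (Or.inr rfl)) (c5_adj hC5 4 3 (Or.inr rfl))
    (c5_adj hC5 3 2 (Or.inr rfl))
    (c5_non hC5 3 0 (by decide)) n4 n2 (c5_non hC5 0 2 (by decide))
    (c5_non hC5 4 2 (by decide))
    (c5_ne hC5 3 0 (by decide))
    (fun h => c5_non hC5 4 1 (by decide) (h ▸ h1))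
    (fun h => c5_non hC5 2 0 (by decide) (h ▸ h0))
    (c5_ne hC5 0 2 (by decide)) (c5_ne hC5 4 2 (by decide))

lemma bad (hban : _root_.Free banner G) (hC5 : IsInducedC5 G v) (i : Fin 5) {x : V}
    (h0 : G.Adj x (v i)) (h1 : G.Adj x (v (i+1))) (h3 : G.Adj x (v (i+3)))
    (n2 : ¬G.Adj x (v (i+2))) (n4 : ¬G.Adj x (v (i+4))) : False :=
  bad0 hban (rotC5 hC5 i)
    (show G.Adj x (v (0 + i)) by rw [zero_add]; exact h0)
    (show G.Adj x (v (1 + i)) by rw [add_comm]; exact h1)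
    (show G.Adj x (v (3 + i)) by rw [add_comm]; exact h3)
    (show ¬G.Adj x (v (2 + i)) by rw [add_comm]; exact n2)
    (show ¬G.Adj x (v (4 + i)) by rw [add_comm]; exact n4)

lemma center (hban : _root_.Free banner G) (hC5 : IsInducedC5 G v) (x : V)
    (hcard : ({j | G.Adj x (v j)} : Set (Fin 5)).ncard = 3) :
    ∃ i, G.Adj x (v (i+4)) ∧ G.Adj x (v i) ∧ G.Adj x (v (i+1)) ∧
      ¬G.Adj x (v (i+2)) ∧ ¬G.Adj x (v (i+3)) := by
  rw [Set.ncard_eq_three] at hcard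
  obtain ⟨a, b, c, hab, hac, hbc, hS⟩ := hcard
  have key : ∀ j : Fin 5, G.Adj x (v j) ↔ (j = a ∨ j = b ∨ j = c) := by
    intro j
    have := Set.ext_iff.mp hS j
    simpa using this
  have dec : ∀ a b c : Fin 5, a ≠ b → a ≠ c → b ≠ c →
      (∃ i : Fin 5, (i+4 = a ∨ i+4 = b ∨ i+4 = c) ∧ (i = a ∨ i = b ∨ i = c) ∧
        (i+1 = a ∨ i+1 = b ∨ i+1 = c) ∧ ¬(i+2 = a ∨ i+2 = b ∨ i+2 = c) ∧
        ¬(i+3 = a ∨ i+3 = b ∨ i+3 = c)) ∨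
      (∃ i : Fin 5, (i = a ∨ i = b ∨ i = c) ∧ (i+1 = a ∨ i+1 = b ∨ i+1 = c) ∧
        (i+3 = a ∨ i+3 = b ∨ i+3 = c) ∧ ¬(i+2 = a ∨ i+2 = b ∨ i+2 = c) ∧
        ¬(i+4 = a ∨ i+4 = b ∨ i+4 = c)) := by decide
  rcases dec a b c hab hac hbc with ⟨i, p1, p2, p3, p4, p5⟩ | ⟨i, p1, p2, p3, p4, p5⟩
  · exact ⟨i, (key _).mpr p1, (key _).mpr p2, (key _).mpr p3,
      fun h => p4 ((key _).mp h), fun h => p5 ((key _).mp h)⟩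
  · exact (bad hban hC5 i ((key _).mpr p1) ((key _).mpr p2) ((key _).mpr p3)
      (fun h => p4 ((key _).mp h)) (fun h => p5 ((key _).mp h))).elim

lemma caseJ0 (hban : _root_.Free banner G) (hC5 : IsInducedC5 G v) {x y : V}
    (hx4 : G.Adj x (v 4)) (hx0 : G.Adj x (v 0)) (hx1 : G.Adj x (v 1))
    (hx2 : ¬G.Adj x (v 2)) (hx3 : ¬G.Adj x (v 3))
    (hy4 : G.Adj y (v 4)) (hy0 : G.Adj y (v 0)) (hy1 : G.Adj y (v 1))
    (hy2 : ¬G.Adj y (v 2)) (hy3 : ¬G.Adj y (v 3))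
    (hne : x ≠ y) (hnadj : ¬ G.Adj x y) : False :=
  no_banner' hban (v 1) x (v 4) y (v 2)
    hx1.symm hx4 hy4.symm hy1 (c5_adj hC5 1 2 (Or.inl rfl))
    (c5_non hC5 1 4 (by decide)) hnadj hx2 (c5_non hC5 4 2 (by decide)) hy2
    (c5_ne hC5 1 4 (by decide)) hne
    (fun h => c5_non hC5 2 0 (by decide) (h ▸ hx0))
    (c5_ne hC5 4 2 (by decide))
    (fun h => c5_non hC5 2 0 (by decide) (h ▸ hy0))

lemma caseJ1 (hp6 : _root_.Free (SimpleGraph.pathGraph 6) G) (hban : _root_.Free banner G)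
    (hC5 : IsInducedC5 G v) {x y q : V}
    (hx4 : G.Adj x (v 4)) (hx0 : G.Adj x (v 0)) (hx1 : G.Adj x (v 1))
    (hx2 : ¬G.Adj x (v 2)) (hx3 : ¬G.Adj x (v 3))
    (hy0 : G.Adj y (v 0)) (hy1 : G.Adj y (v 1)) (hy2 : G.Adj y (v 2))
    (hy3 : ¬G.Adj y (v 3)) (hy4 : ¬G.Adj y (v 4))
    (hq : G.Adj x q) (hqv : ∀ t, ¬ G.Adj q (v t))
    (hnadj : ¬ G.Adj x y) : False := by
  have hnexy : x ≠ y := fun h => hy4 (h ▸ hx4)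
  by_cases hqy : G.Adj q y
  · exact no_banner' hban x q y (v 1) (v 4)
      hq hqy hy1 hx1.symm hx4
      hnadj (hqv 1) (hqv 4) hy4 (c5_non hC5 1 4 (by decide))
      hnexy (qne hC5 hqv 1) (qne hC5 hqv 4)
      (fun h => c5_non hC5 4 2 (by decide) (by rw [← h]; exact hy2))
      (c5_ne hC5 1 4 (by decide))
  · exact no_p6' hp6 q x (v 4) (v 3) (v 2) y
      hq.symm hx4 (c5_adj hC5 4 3 (Or.inr rfl)) (c5_adj hC5 3 2 (Or.inr rfl)) hy2.symm
      (hqv 4) (hqv 3) (hqv 2) hqy hx3 hx2 hnadj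
      (c5_non hC5 4 2 (by decide)) (fun h => hy4 h.symm) (fun h => hy3 h.symm)
      (qne hC5 hqv 4) (qne hC5 hqv 3) (qne hC5 hqv 2)
      (fun h => hqv 0 (by rw [h]; exact hy0))
      (fun h => c5_non hC5 3 0 (by decide) (h ▸ hx0))
      (fun h => c5_non hC5 2 0 (by decide) (h ▸ hx0))
      hnexy (c5_ne hC5 4 2 (by decide))
      (fun h => c5_non hC5 4 2 (by decide) (by rw [h]; exact hy2))
      (fun h => c5_non hC5 3 0 (by decide) (by rw [h]; exact hy0))

lemma caseJ2 (hp6 : _root_.Free (SimpleGraph.pathGraph 6) G) (hban : _root_.Free banner G)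
    (hC5 : IsInducedC5 G v) {x y q q' : V}
    (hx4 : G.Adj x (v 4)) (hx0 : G.Adj x (v 0)) (hx1 : G.Adj x (v 1))
    (hx2 : ¬G.Adj x (v 2)) (hx3 : ¬G.Adj x (v 3))
    (hy1 : G.Adj y (v 1)) (hy2 : G.Adj y (v 2)) (hy3 : G.Adj y (v 3))
    (hy4 : ¬G.Adj y (v 4)) (hy0 : ¬G.Adj y (v 0))
    (hq : G.Adj x q) (hqv : ∀ t, ¬ G.Adj q (v t))
    (hq' : G.Adj y q') (hq'v : ∀ t, ¬ G.Adj q' (v t))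
    (hnadj : ¬ G.Adj x y) : False := by
  have hnexy : x ≠ y := fun h => hy0 (by rw [← h]; exact hx0)
  by_cases hqy : G.Adj q y
  · exact no_banner' hban x q y (v 1) (v 4)
      hq hqy hy1 hx1.symm hx4
      hnadj (hqv 1) (hqv 4) hy4 (c5_non hC5 1 4 (by decide))
      hnexy (qne hC5 hqv 1) (qne hC5 hqv 4)
      (fun h => c5_non hC5 4 2 (by decide) (by rw [← h]; exact hy2))
      (c5_ne hC5 1 4 (by decide))
  by_cases hq'x : G.Adj q' x
  · exact no_banner' hban y q' x (v 1) (v 3)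
      hq' hq'x hx1 hy1.symm hy3
      (fun h => hnadj h.symm) (hq'v 1) (hq'v 3) hx3 (c5_non hC5 1 3 (by decide))
      hnexy.symm (qne hC5 hq'v 1) (qne hC5 hq'v 3)
      (fun h => c5_non hC5 3 0 (by decide) (by rw [← h]; exact hx0))
      (c5_ne hC5 1 3 (by decide))
  by_cases hqq' : G.Adj q q'
  · exact no_p6' hp6 (v 2) y q' q x (v 4)
      hy2.symm hq' hqq'.symm hq.symm hx4
      (fun h => hq'v 2 h.symm) (fun h => hqv 2 h.symm) (fun h => hx2 h.symm)
      (c5_non hC5 2 4 (by decide))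
      (fun h => hqy h.symm) (fun h => hnadj h.symm) hy4
      hq'x (hq'v 4) (hqv 4)
      (qne hC5 hq'v 2).symm (qne hC5 hqv 2).symm
      (fun h => c5_non hC5 2 0 (by decide) (by rw [h]; exact hx0))
      (c5_ne hC5 2 4 (by decide))
      (fun h => hqv 1 (by rw [← h]; exact hy1))
      hnexy.symm
      (fun h => c5_non hC5 4 1 (by decide) (by rw [← h]; exact hy1))
      (fun h => hq'v 0 (by rw [h]; exact hx0))
      (qne hC5 hq'v 4) (qne hC5 hqv 4)
  · have hqq : q ≠ q' := fun h => hqy (by rw [h]; exact hq'.symm)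
    exact no_p6' hp6 q x (v 4) (v 3) y q'
      hq.symm hx4 (c5_adj hC5 4 3 (Or.inr rfl)) hy3.symm hq'
      (hqv 4) (hqv 3) hqy hqq' hx3 hnadj
      (fun h => hq'x h.symm) (fun h => hy4 h.symm) (fun h => hq'v 4 h.symm)
      (fun h => hq'v 3 h.symm)
      (qne hC5 hqv 4) (qne hC5 hqv 3)
      (fun h => hqv 1 (by rw [h]; exact hy1)) hqq
      (fun h => c5_non hC5 3 0 (by decide) (h ▸ hx0))
      hnexy
      (fun h => hq'v 0 (by rw [← h]; exact hx0))
      (fun h => c5_non hC5 4 1 (by decide) (by rw [h]; exact hy1))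
      (qne hC5 hq'v 4).symm (qne hC5 hq'v 3).symm

end Aux

theorem stmt_10 {V : Type*} (G : SimpleGraph V)
    (hp6 : _root_.Free (SimpleGraph.pathGraph 6) G) (hban : _root_.Free banner G)
    (v : Fin 5 → V) (hC5 : IsInducedC5 G v)
    (Q : Set V) (hQconn : (G.induce Q).Connected) (hQ : Anticomplete5 G Q v) :
    G.IsClique
      ({x | ({j | G.Adj x (v j)} : Set (Fin 5)).ncard = 3 ∧ ∃ q ∈ Q, G.Adj x q} : Set V) := by
  rw [SimpleGraph.isClique_iff]
  intro x hx y hy hne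
  by_contra hnadj
  obtain ⟨hxcard, qx, hqxQ, hqx⟩ := hx
  obtain ⟨hycard, qy, hqyQ, hqy⟩ := hy
  have hqv : ∀ t, ¬ G.Adj qx (v t) := hQ.2 qx hqxQ
  have hq'v : ∀ t, ¬ G.Adj qy (v t) := hQ.2 qy hqyQ
  obtain ⟨i, xi1, xi2, xi3, xi4, xi5⟩ := center hban hC5 x hxcard
  obtain ⟨j, yj1, yj2, yj3, yj4, yj5⟩ := center hban hC5 y hycard
  rcases (by decide : ∀ t : Fin 5, t = 0 ∨ t = 1 ∨ t = 2 ∨ t = 3 ∨ t = 4) (j - i)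
    with h|h|h|h|h
  · -- j = i
    have hj : j = i := sub_eq_zero.mp h
    subst hj
    exact caseJ0 hban (rotC5 hC5 j)
      (show G.Adj x (v (4 + j)) by rw [add_comm]; exact xi1)
      (show G.Adj x (v (0 + j)) by rw [zero_add]; exact xi2)
      (show G.Adj x (v (1 + j)) by rw [add_comm]; exact xi3)
      (show ¬G.Adj x (v (2 + j)) by rw [add_comm]; exact xi4)
      (show ¬G.Adj x (v (3 + j)) by rw [add_comm]; exact xi5)
      (show G.Adj y (v (4 + j)) by rw [add_comm]; exact yj1)
      (show G.Adj y (v (0 + j)) by rw [zero_add]; exact yj2)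
      (show G.Adj y (v (1 + j)) by rw [add_comm]; exact yj3)
      (show ¬G.Adj y (v (2 + j)) by rw [add_comm]; exact yj4)
      (show ¬G.Adj y (v (3 + j)) by rw [add_comm]; exact yj5)
      hne hnadj
  · -- j = 1 + i
    have hj : j = 1 + i := sub_eq_iff_eq_add.mp h
    subst hj
    exact caseJ1 hp6 hban (rotC5 hC5 i)
      (show G.Adj x (v (4 + i)) by rw [add_comm]; exact xi1)
      (show G.Adj x (v (0 + i)) by rw [zero_add]; exact xi2)
      (show G.Adj x (v (1 + i)) by rw [add_comm]; exact xi3)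
      (show ¬G.Adj x (v (2 + i)) by rw [add_comm]; exact xi4)
      (show ¬G.Adj x (v (3 + i)) by rw [add_comm]; exact xi5)
      (show G.Adj y (v (0 + i)) by
        rw [(by decide : ∀ t : Fin 5, 0 + t = 1 + t + 4) i]; exact yj1)
      (show G.Adj y (v (1 + i)) from yj2)
      (show G.Adj y (v (2 + i)) by
        rw [(by decide : ∀ t : Fin 5, 2 + t = 1 + t + 1) i]; exact yj3)
      (show ¬G.Adj y (v (3 + i)) by
        rw [(by decide : ∀ t : Fin 5, 3 + t = 1 + t + 2) i]; exact yj4)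
      (show ¬G.Adj y (v (4 + i)) by
        rw [(by decide : ∀ t : Fin 5, 4 + t = 1 + t + 3) i]; exact yj5)
      hqx (fun t => hqv (t + i)) hnadj
  · -- j = 2 + i
    have hj : j = 2 + i := sub_eq_iff_eq_add.mp h
    subst hj
    exact caseJ2 hp6 hban (rotC5 hC5 i)
      (show G.Adj x (v (4 + i)) by rw [add_comm]; exact xi1)
      (show G.Adj x (v (0 + i)) by rw [zero_add]; exact xi2)
      (show G.Adj x (v (1 + i)) by rw [add_comm]; exact xi3)
      (show ¬G.Adj x (v (2 + i)) by rw [add_comm]; exact xi4)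
      (show ¬G.Adj x (v (3 + i)) by rw [add_comm]; exact xi5)
      (show G.Adj y (v (1 + i)) by
        rw [(by decide : ∀ t : Fin 5, 1 + t = 2 + t + 4) i]; exact yj1)
      (show G.Adj y (v (2 + i)) from yj2)
      (show G.Adj y (v (3 + i)) by
        rw [(by decide : ∀ t : Fin 5, 3 + t = 2 + t + 1) i]; exact yj3)
      (show ¬G.Adj y (v (4 + i)) by
        rw [(by decide : ∀ t : Fin 5, 4 + t = 2 + t + 2) i]; exact yj4)
      (show ¬G.Adj y (v (0 + i)) by
        rw [(by decide : ∀ t : Fin 5, 0 + t = 2 + t + 3) i]; exact yj5)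
      hqx (fun t => hqv (t + i)) hqy (fun t => hq'v (t + i)) hnadj
  · -- i = 2 + j : swap roles
    have hj : i = 2 + j := sub_eq_iff_eq_add.mp (by rw [← neg_sub j i, h]; decide)
    subst hj
    exact caseJ2 hp6 hban (rotC5 hC5 j)
      (show G.Adj y (v (4 + j)) by rw [add_comm]; exact yj1)
      (show G.Adj y (v (0 + j)) by rw [zero_add]; exact yj2)
      (show G.Adj y (v (1 + j)) by rw [add_comm]; exact yj3)
      (show ¬G.Adj y (v (2 + j)) by rw [add_comm]; exact yj4)
      (show ¬G.Adj y (v (3 + j)) by rw [add_comm]; exact yj5)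
      (show G.Adj x (v (1 + j)) by
        rw [(by decide : ∀ t : Fin 5, 1 + t = 2 + t + 4) j]; exact xi1)
      (show G.Adj x (v (2 + j)) from xi2)
      (show G.Adj x (v (3 + j)) by
        rw [(by decide : ∀ t : Fin 5, 3 + t = 2 + t + 1) j]; exact xi3)
      (show ¬G.Adj x (v (4 + j)) by
        rw [(by decide : ∀ t : Fin 5, 4 + t = 2 + t + 2) j]; exact xi4)
      (show ¬G.Adj x (v (0 + j)) by
        rw [(by decide : ∀ t : Fin 5, 0 + t = 2 + t + 3) j]; exact xi5)
      hqy (fun t => hq'v (t + j)) hqx (fun t => hqv (t + j))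
      (fun hh => hnadj hh.symm)
  · -- i = 1 + j : swap roles
    have hj : i = 1 + j := sub_eq_iff_eq_add.mp (by rw [← neg_sub j i, h]; decide)
    subst hj
    exact caseJ1 hp6 hban (rotC5 hC5 j)
      (show G.Adj y (v (4 + j)) by rw [add_comm]; exact yj1)
      (show G.Adj y (v (0 + j)) by rw [zero_add]; exact yj2)
      (show G.Adj y (v (1 + j)) by rw [add_comm]; exact yj3)
      (show ¬G.Adj y (v (2 + j)) by rw [add_comm]; exact yj4)
      (show ¬G.Adj y (v (3 + j)) by rw [add_comm]; exact yj5)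
      (show G.Adj x (v (0 + j)) by
        rw [(by decide : ∀ t : Fin 5, 0 + t = 1 + t + 4) j]; exact xi1)
      (show G.Adj x (v (1 + j)) from xi2)
      (show G.Adj x (v (2 + j)) by
        rw [(by decide : ∀ t : Fin 5, 2 + t = 1 + t + 1) j]; exact xi3)
      (show ¬G.Adj x (v (3 + j)) by
        rw [(by decide : ∀ t : Fin 5, 3 + t = 1 + t + 2) j]; exact xi4)
      (show ¬G.Adj x (v (4 + j)) by
        rw [(by decide : ∀ t : Fin 5, 4 + t = 1 + t + 3) j]; exact xi5)
      hqy (fun t => hq'v (t + j))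
      (fun hh => hnadj hh.symm)
end

section
/- Let G be a (banner, K_{2,3})-free graph, H an induced 5-cycle with vertices v1,...,v5, and Q a connected vertex set disjoint from and anticomplete to H. Then the set A5+ of vertices adjacent to all five vertices of H and having at least one neighbor in Q is a clique. -/
open SimpleGraph

set_option maxHeartbeats 1000000 in
theorem stmt_11 {V : Type*} (G : SimpleGraph V)
    (hban : _root_.Free banner G) (hk23 : _root_.Free k23 G)
    (v : Fin 5 → V) (hC5 : IsInducedC5 G v)
    (Q : Set V) (hQconn : (G.induce Q).Connected) (hQ : Anticomplete5 G Q v) :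
    G.IsClique ({x | (∀ i, G.Adj x (v i)) ∧ ∃ q ∈ Q, G.Adj x q} : Set V) := by

  rintro x ⟨hx, qx, hqxQ, hxqx⟩ y ⟨hy, qy, hqyQ, hyqy⟩ hne
  by_contra hxy
  have hvinj := hC5.1
  have hvadj := hC5.2
  have hv02 : ¬ G.Adj (v 0) (v 2) := by rw [hvadj]; decide
  have hv02' : v 0 ≠ v 2 := fun h => by exact absurd (hvinj h) (by decide)
  have hxv : ∀ i, x ≠ v i := fun i h => G.loopless.irrefl _ (h ▸ hx i)
  have hyv : ∀ i, y ≠ v i := fun i h => G.loopless.irrefl _ (h ▸ hy i)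
  have hqv : ∀ i, qx ≠ v i := fun i h => hQ.1 i (h ▸ hqxQ)
  have hqadj : ∀ i, ¬ G.Adj qx (v i) := hQ.2 qx hqxQ
  have hqxx : qx ≠ x := fun h => G.loopless.irrefl _ (h ▸ hxqx)
  have hqxy : qx ≠ y := fun h => hxy (h ▸ hxqx)
  by_cases hyq : G.Adj y qx
  · -- K_{2,3} on {x,y} and {v0, v2, qx}
    refine hk23.false ⟨⟨Sum.elim ![x, y] ![v 0, v 2, qx], ?_⟩, ?_⟩
    · rintro (a|a) (b|b) h <;> fin_cases a <;> fin_cases b <;>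
        simp_all <;> first | rfl | (exfalso; simp_all [eq_comm])
    · rintro (a|a) (b|b) <;> fin_cases a <;> fin_cases b <;>
        simp [k23, G.adj_comm] <;>
        first
          | exact hxy | exact G.loopless x | exact G.loopless y
          | exact fun h => hxy h.symm
          | exact hx _ | exact hy _ | exact hxqx | exact hyq
          | exact (hx _).symm | exact (hy _).symm | exact hxqx.symm | exact hyq.symm
          | exact hv02 | exact fun h => hv02 h.symm
          | exact hqadj _ | exact fun h => hqadj _ h.symm
          | exact G.loopless _
  · -- banner on x, v0, y, v2 with pendant qx at x
    refine hban.false ⟨⟨![x, v 0, y, v 2, qx], ?_⟩, ?_⟩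
    · intro a b h
      fin_cases a <;> fin_cases b <;> simp_all <;>
        first | rfl | (exfalso; simp_all [eq_comm])
    · intro a b
      fin_cases a <;> fin_cases b <;>
        simp [banner, G.adj_comm] <;>
        first
          | exact hxy | exact fun h => hxy h.symm
          | exact hx 0 | exact hx 2 | exact hy 0 | exact hy 2 | exact hxqx
          | exact (hx 0).symm | exact (hx 2).symm | exact (hy 0).symm
          | exact (hy 2).symm | exact hxqx.symm
          | exact hv02 | exact fun h => hv02 h.symm
          | exact hyq | exact fun h => hyq h.symm
          | exact hqadj _ | exact fun h => hqadj _ h.symm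
          | exact G.loopless _
end

section
/- Let G be a (P6, banner)-free graph containing an induced 5-cycle H with vertices v1,...,v5 (indices mod 5), and let Q be a connected vertex set disjoint from and anticomplete to H. Then no vertex having a neighbor in Q has exactly one, exactly two, or exactly four neighbors on H; that is, every vertex with a neighbor in Q and at least one neighbor on H has either exactly three or exactly five neighbors on H. -/
open SimpleGraph

/-- Rotating an induced C5 gives an induced C5. -/
lemma stmt13_rot {V : Type*} {G : SimpleGraph V} {v : Fin 5 → V} (h : IsInducedC5 G v)
    (k : Fin 5) : IsInducedC5 G (fun i => v (i + k)) := by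
  obtain ⟨hinj, hadj⟩ := h
  refine ⟨fun a b hab => add_right_cancel (hinj hab), fun i j => ?_⟩
  rw [hadj]
  constructor
  · rintro (h | h)
    · exact Or.inl (add_right_cancel (h.trans (by abel) : j + k = (i + 1) + k))
    · exact Or.inr (add_right_cancel (h.trans (by abel) : i + k = (j + 1) + k))
  · rintro (rfl | rfl)
    · exact Or.inl (by abel)
    · exact Or.inr (by abel)

/-- If x (with a neighbour q outside, anticomplete to the C5) has exactly one
neighbour `v 0` on the C5, we get an induced P6: q-x-v0-v1-v2-v3. -/
lemma stmt13_case1 {V : Type*} {G : SimpleGraph V}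
    (hp6 : _root_.Free (SimpleGraph.pathGraph 6) G)
    {v : Fin 5 → V} (hC5 : IsInducedC5 G v)
    {q x : V} (hq : ∀ i, ¬ G.Adj q (v i))
    (hxq : G.Adj x q)
    (hx : ∀ i, G.Adj x (v i) ↔ i = 0) : False := by
  obtain ⟨hinj, hv⟩ := hC5
  have hq' : ∀ i, ¬ G.Adj (v i) q := fun i h => hq i h.symm
  have hx' : ∀ i, G.Adj (v i) x ↔ i = 0 := fun i => by rw [G.adj_comm]; exact hx i
  have hqx : G.Adj q x := hxq.symm
  have hqv : ∀ i, q ≠ v i := by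
    intro i h
    exact hq (i+1) (by rw [h]; exact (hv i (i+1)).mpr (Or.inl rfl))
  have hxv : ∀ i, x ≠ v i := fun i h => hq i (h ▸ hxq).symm
  have hinj5 : Function.Injective (![q, x, v 0, v 1, v 2, v 3] : Fin 6 → V) := by
    intro a b
    fin_cases a <;> fin_cases b <;> intro hab <;>
      first
      | rfl
      | (exact absurd (hinj hab) (by decide))
      | (exact absurd hab (hqv _))
      | (exact absurd hab.symm (hqv _))
      | (exact absurd hab (hxv _))
      | (exact absurd hab.symm (hxv _))
      | (exact absurd hab hxq.ne')
      | (exact absurd hab hxq.ne)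
  refine hp6.false ⟨⟨![q, x, v 0, v 1, v 2, v 3], hinj5⟩, ?_⟩
  · intro a b
    fin_cases a <;> fin_cases b <;>
      simp [Function.Embedding.coeFn_mk, pathGraph_adj, hv, hx, hx', hq, hq', hqx, hxq,
        show (![q, x, v 0, v 1, v 2, v 3] : Fin 6 → V) 5 = v 3 from rfl] <;> decide

/-- If x has exactly the two consecutive neighbours `v 0, v 1` on the C5,
we get an induced P6: q-x-v0-v4-v3-v2. -/
lemma stmt13_case2a {V : Type*} {G : SimpleGraph V}
    (hp6 : _root_.Free (SimpleGraph.pathGraph 6) G)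
    {v : Fin 5 → V} (hC5 : IsInducedC5 G v)
    {q x : V} (hq : ∀ i, ¬ G.Adj q (v i))
    (hxq : G.Adj x q)
    (hx : ∀ i, G.Adj x (v i) ↔ i = 0 ∨ i = 1) : False := by
  obtain ⟨hinj, hv⟩ := hC5
  have hq' : ∀ i, ¬ G.Adj (v i) q := fun i h => hq i h.symm
  have hx' : ∀ i, G.Adj (v i) x ↔ i = 0 ∨ i = 1 := fun i => by rw [G.adj_comm]; exact hx i
  have hqx : G.Adj q x := hxq.symm
  have hqv : ∀ i, q ≠ v i := by
    intro i h
    exact hq (i+1) (by rw [h]; exact (hv i (i+1)).mpr (Or.inl rfl))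
  have hxv : ∀ i, x ≠ v i := fun i h => hq i (h ▸ hxq).symm
  have hinj5 : Function.Injective (![q, x, v 0, v 4, v 3, v 2] : Fin 6 → V) := by
    intro a b
    fin_cases a <;> fin_cases b <;> intro hab <;>
      first
      | rfl
      | (exact absurd (hinj hab) (by decide))
      | (exact absurd hab (hqv _))
      | (exact absurd hab.symm (hqv _))
      | (exact absurd hab (hxv _))
      | (exact absurd hab.symm (hxv _))
      | (exact absurd hab hxq.ne')
      | (exact absurd hab hxq.ne)
  refine hp6.false ⟨⟨![q, x, v 0, v 4, v 3, v 2], hinj5⟩, ?_⟩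
  · intro a b
    fin_cases a <;> fin_cases b <;>
      simp [Function.Embedding.coeFn_mk, pathGraph_adj, hv, hx, hx', hq, hq', hqx, hxq,
        show (![q, x, v 0, v 4, v 3, v 2] : Fin 6 → V) 5 = v 2 from rfl] <;> decide

/-- If x has exactly the two nonconsecutive neighbours `v 0, v 2` on the C5,
we get an induced banner: 4-cycle x-v0-v1-v2-x with pendant q at x. -/
lemma stmt13_case2b {V : Type*} {G : SimpleGraph V}
    (hban : _root_.Free banner G)
    {v : Fin 5 → V} (hC5 : IsInducedC5 G v)
    {q x : V} (hq : ∀ i, ¬ G.Adj q (v i))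
    (hxq : G.Adj x q)
    (hx : ∀ i, G.Adj x (v i) ↔ i = 0 ∨ i = 2) : False := by
  obtain ⟨hinj, hv⟩ := hC5
  have hq' : ∀ i, ¬ G.Adj (v i) q := fun i h => hq i h.symm
  have hx' : ∀ i, G.Adj (v i) x ↔ i = 0 ∨ i = 2 := fun i => by rw [G.adj_comm]; exact hx i
  have hqx : G.Adj q x := hxq.symm
  have hqv : ∀ i, q ≠ v i := by
    intro i h
    exact hq (i+1) (by rw [h]; exact (hv i (i+1)).mpr (Or.inl rfl))
  have hxv : ∀ i, x ≠ v i := fun i h => hq i (h ▸ hxq).symm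
  have hinj5 : Function.Injective (![x, v 0, v 1, v 2, q] : Fin 5 → V) := by
    intro a b
    fin_cases a <;> fin_cases b <;> intro hab <;>
      first
      | rfl
      | (exact absurd (hinj hab) (by decide))
      | (exact absurd hab (hqv _))
      | (exact absurd hab.symm (hqv _))
      | (exact absurd hab (hxv _))
      | (exact absurd hab.symm (hxv _))
      | (exact absurd hab hxq.ne')
      | (exact absurd hab hxq.ne)
  refine hban.false ⟨⟨![x, v 0, v 1, v 2, q], hinj5⟩, ?_⟩
  · intro a b
    fin_cases a <;> fin_cases b <;>
      simp [Function.Embedding.coeFn_mk, banner, fromRel_adj, hv, hx, hx', hq, hq', hqx, hxq,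
        show (![x, v 0, v 1, v 2, q] : Fin 5 → V) 4 = q from rfl] <;> decide

/-- If x is adjacent to all of the C5 except `v 0`, we get an induced banner:
4-cycle x-v1-v0-v4-x with pendant q at x. -/
lemma stmt13_case4 {V : Type*} {G : SimpleGraph V}
    (hban : _root_.Free banner G)
    {v : Fin 5 → V} (hC5 : IsInducedC5 G v)
    {q x : V} (hq : ∀ i, ¬ G.Adj q (v i))
    (hxq : G.Adj x q)
    (hx : ∀ i, G.Adj x (v i) ↔ i ≠ 0) : False := by
  obtain ⟨hinj, hv⟩ := hC5
  have hq' : ∀ i, ¬ G.Adj (v i) q := fun i h => hq i h.symm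
  have hx' : ∀ i, G.Adj (v i) x ↔ i ≠ 0 := fun i => by rw [G.adj_comm]; exact hx i
  have hqx : G.Adj q x := hxq.symm
  have hqv : ∀ i, q ≠ v i := by
    intro i h
    exact hq (i+1) (by rw [h]; exact (hv i (i+1)).mpr (Or.inl rfl))
  have hxv : ∀ i, x ≠ v i := fun i h => hq i (h ▸ hxq).symm
  have hinj5 : Function.Injective (![x, v 1, v 0, v 4, q] : Fin 5 → V) := by
    intro a b
    fin_cases a <;> fin_cases b <;> intro hab <;>
      first
      | rfl
      | (exact absurd (hinj hab) (by decide))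
      | (exact absurd hab (hqv _))
      | (exact absurd hab.symm (hqv _))
      | (exact absurd hab (hxv _))
      | (exact absurd hab.symm (hxv _))
      | (exact absurd hab hxq.ne')
      | (exact absurd hab hxq.ne)
  refine hban.false ⟨⟨![x, v 1, v 0, v 4, q], hinj5⟩, ?_⟩
  · intro a b
    fin_cases a <;> fin_cases b <;>
      simp [Function.Embedding.coeFn_mk, banner, fromRel_adj, hv, hx, hx', hq, hq', hqx, hxq,
        show (![x, v 1, v 0, v 4, q] : Fin 5 → V) 4 = q from rfl] <;> decide

theorem stmt_13 {V : Type*} (G : SimpleGraph V)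
    (hp6 : _root_.Free (SimpleGraph.pathGraph 6) G) (hban : _root_.Free banner G)
    (v : Fin 5 → V) (hC5 : IsInducedC5 G v)
    (Q : Set V) (hQconn : (G.induce Q).Connected) (hQ : Anticomplete5 G Q v) :
    ∀ x : V, (∃ q ∈ Q, G.Adj x q) →
      ({j | G.Adj x (v j)} : Set (Fin 5)).ncard ≠ 1 ∧
      ({j | G.Adj x (v j)} : Set (Fin 5)).ncard ≠ 2 ∧
      ({j | G.Adj x (v j)} : Set (Fin 5)).ncard ≠ 4 := by
  rintro x ⟨q, hqQ, hxq⟩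
  have hq : ∀ i, ¬ G.Adj q (v i) := hQ.2 q hqQ
  have key1 : ∀ a i : Fin 5, i + a = a ↔ i = 0 := by decide
  have key2 : ∀ a i : Fin 5, i + a = a + 1 ↔ i = 1 := by decide
  have key3 : ∀ a i : Fin 5, i + a = a + 2 ↔ i = 2 := by decide
  refine ⟨?_, ?_, ?_⟩
  · intro h1
    obtain ⟨a, ha⟩ := Set.ncard_eq_one.mp h1
    have hx : ∀ i, G.Adj x (v i) ↔ i = a := fun i => by
      have := Set.ext_iff.mp ha i; simpa using this
    exact stmt13_case1 hp6 (stmt13_rot hC5 a) (fun i => hq (i + a)) hxq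
      (fun i => by rw [hx]; exact key1 a i)
  · intro h2
    obtain ⟨a, b, hab, hs⟩ := Set.ncard_eq_two.mp h2
    have hx : ∀ i, G.Adj x (v i) ↔ i = a ∨ i = b := fun i => by
      have := Set.ext_iff.mp hs i; simpa using this
    have hcases : ∀ a b : Fin 5, a ≠ b →
        b = a + 1 ∨ b = a + 2 ∨ a = b + 2 ∨ a = b + 1 := by decide
    rcases hcases a b hab with hc | hc | hc | hc
    · exact stmt13_case2a hp6 (stmt13_rot hC5 a) (fun i => hq (i + a)) hxq
        (fun i => by rw [hx, hc, key1 a i, key2 a i])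
    · exact stmt13_case2b hban (stmt13_rot hC5 a) (fun i => hq (i + a)) hxq
        (fun i => by rw [hx, hc, key1 a i, key3 a i])
    · refine stmt13_case2b hban (stmt13_rot hC5 b) (fun i => hq (i + b)) hxq (fun i => ?_)
      rw [hx, hc, key1 b i, key3 b i]; tauto
    · refine stmt13_case2a hp6 (stmt13_rot hC5 b) (fun i => hq (i + b)) hxq (fun i => ?_)
      rw [hx, hc, key1 b i, key2 b i]; tauto
  · intro h4
    have hcompl : ({j | G.Adj x (v j)} : Set (Fin 5))ᶜ.ncard = 1 := by
      have := Set.ncard_add_ncard_compl ({j | G.Adj x (v j)} : Set (Fin 5))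
      simp [h4, Nat.card_eq_fintype_card] at this
      omega
    obtain ⟨a, ha⟩ := Set.ncard_eq_one.mp hcompl
    have hx : ∀ i, G.Adj x (v i) ↔ i ≠ a := fun i => by
      have := Set.ext_iff.mp ha i
      simp only [Set.mem_compl_iff, Set.mem_setOf_eq, Set.mem_singleton_iff] at this
      constructor
      · intro h hia; exact (this.mpr hia) h
      · intro h; by_contra hc; exact h (this.mp hc)
    exact stmt13_case4 hban (stmt13_rot hC5 a) (fun i => hq (i + a)) hxq
      (fun i => by rw [hx]; exact not_congr (key1 a i))
end
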